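/- arXiv:1802.08876 — 4 statements merged into one kernel-verified Lean document; each statement's English description precedes it below -/
import Mathlib

section
/- Let T be a finite rooted tree of depth d and let G be a finite simple graph. Then hom(T,G) = Σ_{v∈V(G)} dhom(T, T(G,v)_{≤d}), where hom(T,G) counts the homomorphisms from the underlying unrooted tree of T to G. -/
/-- The number of graph homomorphisms from `F` to `G`. -/
noncomputable def homCount {α β : Type*} (F : SimpleGraph α) (G : SimpleGraph β) : ℕ :=
  Nat.card (F →g G)

/-- The nodes of the depth-`d` tree unfolding of `G` at `v`: walks in `G` starting
at `v` of length at most `d`, encoded as the lists of visited vertices. -/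
def UNode {V : Type*} (G : SimpleGraph V) (v : V) (d : ℕ) : Type _ :=
  {l : List V // l.head? = some v ∧ l.Chain' G.Adj ∧ l.length ≤ d + 1}

/-- The depth-`d` tree unfolding of `G` at `v`, as a graph on walks from `v`:
a walk is adjacent to each of its one-edge extensions. -/
def unfoldTree {V : Type*} (G : SimpleGraph V) (v : V) (d : ℕ) :
    SimpleGraph (UNode G v d) :=
  SimpleGraph.fromRel fun l l' => ∃ x : V, l'.1 = l.1 ++ [x]

/-- The root of the tree unfolding: the length-0 walk `(v)`. -/
def unfoldRoot {V : Type*} (G : SimpleGraph V) (v : V) (d : ℕ) : UNode G v d :=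
  ⟨[v], by refine ⟨rfl, ?_, ?_⟩ <;> simp [List.Chain']⟩

/-- The number of depth-preserving, depth-surjective homomorphisms from the rooted
tree `(T, rT)` to the rooted tree `(T', rT')`, where the depth of a node is its
distance from the root. -/
noncomputable def dhomCount {α β : Type*} (T : SimpleGraph α) (rT : α)
    (T' : SimpleGraph β) (rT' : β) : ℕ :=
  Nat.card {f : α → β //
    (∀ a b, T.Adj a b → T'.Adj (f a) (f b)) ∧
    (∀ a, T'.dist rT' (f a) = T.dist rT a) ∧
    (∀ n : ℕ, (∃ b, T'.dist rT' b = n) → ∃ a, T'.dist rT' (f a) = n)}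

/-! ### Auxiliary lemmas about the unfolding -/

section Unfold

variable {V : Type*} {G : SimpleGraph V} {v : V} {d : ℕ}

lemma UNode_ne_nil (l : UNode G v d) : l.1 ≠ [] := by
  intro h
  have := l.2.1
  rw [h] at this
  simp at this

/-- The last vertex of a node of the unfolding. -/
def lastV (l : UNode G v d) : V := l.1.getLast (UNode_ne_nil l)

lemma unfold_adj_iff {l l' : UNode G v d} :
    (unfoldTree G v d).Adj l l' ↔ (∃ x, l'.1 = l.1 ++ [x]) ∨ (∃ x, l.1 = l'.1 ++ [x]) := by
  constructor
  · rintro ⟨hne, h | h⟩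
    · exact Or.inl h
    · exact Or.inr h
  · intro h
    refine ⟨?_, h.imp id id⟩
    rintro rfl
    rcases h with ⟨x, hx⟩ | ⟨x, hx⟩ <;>
      · apply_fun List.length at hx
        simp at hx

lemma length_lastV_eq {l : UNode G v d} {x : V} (h : l.1 ≠ []) : True := trivial

lemma lastV_adj {l l' : UNode G v d} (h : (unfoldTree G v d).Adj l l') :
    G.Adj (lastV l) (lastV l') := by
  have key : ∀ (a b : UNode G v d) (x : V), b.1 = a.1 ++ [x] → G.Adj (lastV a) (lastV b) := by
    intro a b x hx
    have hc : (a.1 ++ [x]).Chain' G.Adj := hx ▸ b.2.2.1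
    rw [show (a.1 ++ [x]).Chain' G.Adj ↔ (a.1 ++ [x]).IsChain G.Adj from Iff.rfl, List.isChain_append] at hc
    have hadj : G.Adj (a.1.getLast (UNode_ne_nil a)) x := by
      have := hc.2.2 (a.1.getLast (UNode_ne_nil a))
        (List.getLast?_eq_getLast_of_ne_nil (UNode_ne_nil a)) x rfl
      exact this
    have hb : lastV b = x := by
      simp only [lastV]
      rw [List.getLast_congr _ _ hx]
      exact List.getLast_append_of_ne_nil (by simp) (by simp)
    rw [hb]
    exact hadj
  rcases unfold_adj_iff.mp h with ⟨x, hx⟩ | ⟨x, hx⟩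
  · exact key l l' x hx
  · exact (key l' l x hx).symm

lemma exists_walk_root : ∀ (n : ℕ) (l : UNode G v d), l.1.length = n →
    ∃ p : (unfoldTree G v d).Walk (unfoldRoot G v d) l, p.length + 1 = n := by
  intro n
  induction n with
  | zero =>
    intro l hl
    exact absurd (List.length_eq_zero_iff.mp hl) (UNode_ne_nil l)
  | succ m ih =>
    intro l hl
    rcases Nat.eq_zero_or_pos m with hm | hm
    · subst hm
      have hroot : l = unfoldRoot G v d := by
        apply Subtype.ext
        obtain ⟨x, hx⟩ := List.length_eq_one_iff.mp hl
        have h1 := l.2.1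
        rw [hx] at h1 ⊢
        simp only [List.head?_cons, Option.some.injEq] at h1
        simp [unfoldRoot, h1]
      subst hroot
      exact ⟨SimpleGraph.Walk.nil, rfl⟩
    · have hnn := UNode_ne_nil l
      have hd_len : l.1.dropLast.length = m := by simp [hl]
      have hd_ne : l.1.dropLast ≠ [] := by
        intro h
        rw [h] at hd_len
        simp at hd_len
        omega
      have hh : l.1.dropLast.head? = some v := by
        rw [List.head?_dropLast, if_pos (by omega)]
        exact l.2.1
      have hc : l.1.dropLast.Chain' G.Adj := l.2.2.1.prefix (List.dropLast_prefix l.1)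
      have hlen : l.1.dropLast.length ≤ d + 1 := by
        have := l.2.2.2
        omega
      set l₀ : UNode G v d := ⟨l.1.dropLast, hh, hc, hlen⟩ with hl₀
      have hadj : (unfoldTree G v d).Adj l₀ l :=
        unfold_adj_iff.mpr (Or.inl ⟨l.1.getLast hnn, (List.dropLast_append_getLast hnn).symm⟩)
      obtain ⟨p₀, hp₀⟩ := ih l₀ hd_len
      exact ⟨p₀.concat hadj, by rw [SimpleGraph.Walk.length_concat]; omega⟩

lemma length_le_of_walk {l l' : UNode G v d} (p : (unfoldTree G v d).Walk l l') :
    l'.1.length ≤ l.1.length + p.length := by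
  induction p with
  | nil => simp
  | @cons a b c h p ih =>
    have hb : b.1.length ≤ a.1.length + 1 := by
      rcases unfold_adj_iff.mp h with ⟨x, hx⟩ | ⟨x, hx⟩ <;>
        · apply_fun List.length at hx
          simp at hx
          omega
    simp only [SimpleGraph.Walk.length_cons]
    omega

lemma dist_root (l : UNode G v d) :
    (unfoldTree G v d).dist (unfoldRoot G v d) l + 1 = l.1.length := by
  obtain ⟨p, hp⟩ := exists_walk_root l.1.length l rfl
  have h1 := SimpleGraph.dist_le p
  have hr : (unfoldTree G v d).Reachable (unfoldRoot G v d) l := ⟨p⟩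
  obtain ⟨q, hq⟩ := hr.exists_walk_length_eq_dist
  have h2 := length_le_of_walk q
  rw [show (unfoldRoot G v d).1.length = 1 from rfl] at h2
  omega

instance instFiniteUNode [Finite V] : Finite (UNode G v d) := by
  haveI := Fintype.ofFinite V
  haveI : Finite (Fin (d + 2) → Option V) := Finite.of_fintype _
  apply Finite.of_injective (fun (l : UNode G v d) (i : Fin (d + 2)) => l.1[(i : ℕ)]?)
  intro l₁ l₂ h
  apply Subtype.ext
  apply List.ext_getElem?
  intro n
  by_cases hn : n < d + 2
  · exact congrFun h ⟨n, hn⟩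
  · rw [List.getElem?_eq_none (by have := l₁.2.2.2; omega),
      List.getElem?_eq_none (by have := l₂.2.2.2; omega)]

end Unfold

/-! ### Auxiliary lemmas about trees -/

section Tree

variable {α : Type*} {T : SimpleGraph α} (hT : T.IsTree) (rT : α)

include hT

/-- The unique path from the root to a vertex. -/
noncomputable def pathT (a : α) : T.Walk rT a := (hT.existsUnique_path rT a).choose

lemma pathT_isPath (a : α) : (pathT hT rT a).IsPath :=
  (hT.existsUnique_path rT a).choose_spec.1

lemma pathT_unique {a : α} {q : T.Walk rT a} (hq : q.IsPath) : q = pathT hT rT a :=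
  (hT.existsUnique_path rT a).choose_spec.2 q hq

lemma length_pathT (a : α) : (pathT hT rT a).length = T.dist rT a := by
  obtain ⟨p, hp, hl⟩ := hT.isConnected.exists_path_of_dist rT a
  rw [pathT_unique hT rT hp] at hl
  exact hl

lemma dist_le_of_mem_support {a u : α} (hu : u ∈ (pathT hT rT a).support) :
    T.dist rT u ≤ T.dist rT a := by
  classical
  calc T.dist rT u ≤ ((pathT hT rT a).takeUntil u hu).length := SimpleGraph.dist_le _
    _ ≤ (pathT hT rT a).length := SimpleGraph.Walk.length_takeUntil_le _ hu
    _ = T.dist rT a := length_pathT hT rT a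

lemma dist_ne_of_adj {a b : α} (hab : T.Adj a b) : T.dist rT a ≠ T.dist rT b := by
  classical
  intro h
  have hbp : b ∉ (pathT hT rT a).support := by
    intro hmem
    have htu : (pathT hT rT a).takeUntil b hmem = pathT hT rT b :=
      pathT_unique hT rT ((pathT_isPath hT rT a).takeUntil hmem)
    have hspec := SimpleGraph.Walk.take_spec (pathT hT rT a) hmem
    apply_fun SimpleGraph.Walk.length at hspec
    rw [SimpleGraph.Walk.length_append, htu, length_pathT, length_pathT] at hspec
    have hdz : ((pathT hT rT a).dropUntil b hmem).length = 0 := by omega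
    have := SimpleGraph.Walk.eq_of_length_eq_zero hdz
    exact hab.ne' this
  have hcp : ((pathT hT rT a).concat hab).IsPath := by
    rw [SimpleGraph.Walk.isPath_def, SimpleGraph.Walk.support_concat]
    rw [List.nodup_append]
    refine ⟨(pathT_isPath hT rT a).2, List.nodup_singleton b, ?_⟩
    intro x hx x' hx' hxx
    simp at hx'
    rw [hxx, hx'] at hx
    exact hbp hx
  have := pathT_unique hT rT hcp
  apply_fun SimpleGraph.Walk.length at this
  rw [SimpleGraph.Walk.length_concat, length_pathT, length_pathT] at this
  omega

lemma pathT_concat {a b : α} (hab : T.Adj a b) (hd : T.dist rT b = T.dist rT a + 1) :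
    pathT hT rT b = (pathT hT rT a).concat hab := by
  have hbp : b ∉ (pathT hT rT a).support := by
    intro hmem
    have := dist_le_of_mem_support hT rT hmem
    omega
  have hcp : ((pathT hT rT a).concat hab).IsPath := by
    rw [SimpleGraph.Walk.isPath_def, SimpleGraph.Walk.support_concat]
    rw [List.nodup_append]
    refine ⟨(pathT_isPath hT rT a).2, List.nodup_singleton b, ?_⟩
    intro x hx x' hx' hxx
    simp at hx'
    rw [hxx, hx'] at hx
    exact hbp hx
  exact (pathT_unique hT rT hcp).symm

lemma adj_dist {a b : α} (hab : T.Adj a b) :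
    T.dist rT b = T.dist rT a + 1 ∨ T.dist rT a = T.dist rT b + 1 := by
  have h1 : T.dist a b = 1 := SimpleGraph.dist_eq_one_iff_adj.mpr hab
  have h2 : T.dist b a = 1 := SimpleGraph.dist_eq_one_iff_adj.mpr hab.symm
  have h3 := SimpleGraph.Connected.dist_triangle hT.isConnected (u := rT) (v := a) (w := b)
  have h4 := SimpleGraph.Connected.dist_triangle hT.isConnected (u := rT) (v := b) (w := a)
  have h5 := dist_ne_of_adj hT rT hab
  omega

lemma exists_parent {a : α} {n : ℕ} (ha : T.dist rT a = n + 1) :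
    ∃ a', T.Adj a' a ∧ T.dist rT a' = n := by
  obtain ⟨p, hp⟩ := (hT.isConnected rT a).exists_walk_length_eq_dist
  have hnn : ¬ p.reverse.Nil := by
    rw [SimpleGraph.Walk.not_nil_iff_lt_length]
    simp [hp, ha]
  obtain ⟨x, h, q, hq⟩ := SimpleGraph.Walk.not_nil_iff.mp hnn
  refine ⟨x, h.symm, ?_⟩
  have hql : q.length = n := by
    apply_fun SimpleGraph.Walk.length at hq
    simp at hq
    rw [hp, ha] at hq
    omega
  have hle : T.dist rT x ≤ n := by
    have := SimpleGraph.dist_le q.reverse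
    simpa [hql] using this
  have hge : T.dist rT a ≤ T.dist rT x + 1 := by
    have h3 := SimpleGraph.Connected.dist_triangle hT.isConnected (u := rT) (v := x) (w := a)
    have : T.dist x a = 1 := SimpleGraph.dist_eq_one_iff_adj.mpr h.symm
    omega
  omega

lemma tree_exists_dist_eq {d : ℕ} (hd : ∃ a, T.dist rT a = d) :
    ∀ n ≤ d, ∃ a, T.dist rT a = n := by
  have key : ∀ k ≤ d, ∃ a, T.dist rT a = d - k := by
    intro k hk
    induction k with
    | zero => simpa using hd
    | succ m ih =>
      obtain ⟨a, ha⟩ := ih (by omega)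
      have : d - m = (d - (m + 1)) + 1 := by omega
      rw [this] at ha
      obtain ⟨a', _, ha'⟩ := exists_parent hT rT ha
      exact ⟨a', ha'⟩
  intro n hn
  obtain ⟨a, ha⟩ := key (d - n) (by omega)
  exact ⟨a, by rw [ha]; omega⟩

end Tree

/-! ### The main bijection -/

section Main

variable {α V : Type*} {T : SimpleGraph α} {rT : α} {G : SimpleGraph V} {d : ℕ}

/-- The subtype occurring in `dhomCount` specialized to the unfolding. -/
def DH (T : SimpleGraph α) (rT : α) (G : SimpleGraph V) (d : ℕ) (v : V) : Type _ :=
  {f : α → UNode G v d //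
    (∀ a b, T.Adj a b → (unfoldTree G v d).Adj (f a) (f b)) ∧
    (∀ a, (unfoldTree G v d).dist (unfoldRoot G v d) (f a) = T.dist rT a) ∧
    (∀ n : ℕ, (∃ b, (unfoldTree G v d).dist (unfoldRoot G v d) b = n) →
      ∃ a, (unfoldTree G v d).dist (unfoldRoot G v d) (f a) = n)}

variable (hT : T.IsTree) (hle : ∀ a, T.dist rT a ≤ d)

/-- Image of a vertex under the forward map: the image of the root path, as a node of the
unfolding of `G` at `f rT`. -/
noncomputable def fwdNode (f : T →g G) (a : α) : UNode G (f rT) d :=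
  ⟨((pathT hT rT a).map f).support, by
    refine ⟨?_, SimpleGraph.Walk.isChain_adj_support _, ?_⟩
    · rw [SimpleGraph.Walk.support_map, SimpleGraph.Walk.support_eq_cons, List.map_cons]
      rfl
    · rw [SimpleGraph.Walk.support_map, List.length_map, SimpleGraph.Walk.length_support,
        length_pathT]
      exact Nat.succ_le_succ (hle a)⟩

lemma fwdNode_val (f : T →g G) (a : α) :
    (fwdNode hT hle f a).1 = ((pathT hT rT a).map f).support := rfl

lemma lastV_fwdNode (f : T →g G) (a : α) : lastV (fwdNode hT hle f a) = f a := by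
  simpa [lastV, fwdNode_val] using SimpleGraph.Walk.getLast_support ((pathT hT rT a).map f)

lemma fwdNode_len (f : T →g G) (a : α) :
    (fwdNode hT hle f a).1.length = T.dist rT a + 1 := by
  rw [fwdNode_val, SimpleGraph.Walk.support_map, List.length_map,
    SimpleGraph.Walk.length_support, length_pathT]

lemma fwdNode_dist (f : T →g G) (a : α) :
    (unfoldTree G (f rT) d).dist (unfoldRoot G (f rT) d) (fwdNode hT hle f a) = T.dist rT a := by
  have h := dist_root (fwdNode hT hle f a)
  rw [fwdNode_len hT hle f a] at h
  omega

lemma fwdNode_concat {a b : α} (f : T →g G) (hab : T.Adj a b)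
    (hd1 : T.dist rT b = T.dist rT a + 1) :
    (fwdNode hT hle f b).1 = (fwdNode hT hle f a).1 ++ [f b] := by
  rw [fwdNode_val, fwdNode_val, pathT_concat hT rT hab hd1]
  rw [SimpleGraph.Walk.support_map, SimpleGraph.Walk.support_map,
    SimpleGraph.Walk.support_concat, List.map_append, List.map_singleton]

lemma fwd_mem (f : T →g G) (hdd : ∃ a, T.dist rT a = d) :
    (∀ a b, T.Adj a b → (unfoldTree G (f rT) d).Adj (fwdNode hT hle f a) (fwdNode hT hle f b)) ∧
    (∀ a, (unfoldTree G (f rT) d).dist (unfoldRoot G (f rT) d) (fwdNode hT hle f a) =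
      T.dist rT a) ∧
    (∀ n : ℕ, (∃ b, (unfoldTree G (f rT) d).dist (unfoldRoot G (f rT) d) b = n) →
      ∃ a, (unfoldTree G (f rT) d).dist (unfoldRoot G (f rT) d) (fwdNode hT hle f a) = n) := by
  refine ⟨?_, fwdNode_dist hT hle f, ?_⟩
  · intro a b hab
    rcases adj_dist hT rT hab with hd1 | hd1
    · exact unfold_adj_iff.mpr (Or.inl ⟨f b, fwdNode_concat hT hle f hab hd1⟩)
    · exact unfold_adj_iff.mpr (Or.inr ⟨f a, fwdNode_concat hT hle f hab.symm hd1⟩)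
  · rintro n ⟨b, hb⟩
    have h1 := dist_root b
    have h2 := b.2.2.2
    obtain ⟨a, ha⟩ := tree_exists_dist_eq hT rT hdd n (by omega)
    exact ⟨a, by rw [fwdNode_dist hT hle f a, ha]⟩

/-- The forward map. -/
noncomputable def fwd (hdd : ∃ a, T.dist rT a = d) (f : T →g G) :
    Σ v : V, DH T rT G d v :=
  ⟨f rT, fwdNode hT hle f, fwd_mem hT hle f hdd⟩

/-- The backward map. -/
def bwd (v : V) (g : DH T rT G d v) : T →g G :=
  ⟨fun a => lastV (g.1 a), fun hab => lastV_adj (g.2.1 _ _ hab)⟩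

lemma bwd_apply (v : V) (g : DH T rT G d v) (a : α) : bwd v g a = lastV (g.1 a) := rfl

include hT in
lemma bwd_root (v : V) (g : DH T rT G d v) : g.1 rT = unfoldRoot G v d := by
  have h0 : (unfoldTree G v d).dist (unfoldRoot G v d) (g.1 rT) = 0 := by
    rw [g.2.2.1 rT, SimpleGraph.dist_self]
  obtain ⟨p, -⟩ := exists_walk_root (g.1 rT).1.length (g.1 rT) rfl
  exact ((SimpleGraph.Reachable.dist_eq_zero_iff ⟨p⟩).mp h0).symm

include hT in
lemma bwd_rT (v : V) (g : DH T rT G d v) : bwd v g rT = v := by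
  rw [bwd_apply, bwd_root hT v g]
  rfl

lemma bwd_val (v : V) (g : DH T rT G d v) :
    ∀ (n : ℕ) (a : α), T.dist rT a = n →
      (g.1 a).1 = ((pathT hT rT a).map (bwd v g)).support := by
  intro n
  induction n with
  | zero =>
    intro a ha
    have harT : rT = a := (SimpleGraph.Connected.dist_eq_zero_iff hT.isConnected).mp ha
    subst harT
    have hnil : pathT hT rT rT = SimpleGraph.Walk.nil :=
      (pathT_unique hT rT SimpleGraph.Walk.IsPath.nil).symm
    rw [hnil, bwd_root hT v g]
    simp [unfoldRoot, bwd_apply, bwd_root hT v g, lastV]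
  | succ m ih =>
    intro a ha
    obtain ⟨a', haa, ha'⟩ := exists_parent hT rT ha
    have hadj := g.2.1 a' a haa
    have hlen : (g.1 a).1.length = m + 2 := by
      have h1 := dist_root (g.1 a)
      rw [g.2.2.1 a, ha] at h1
      omega
    have hlen' : (g.1 a').1.length = m + 1 := by
      have h1 := dist_root (g.1 a')
      rw [g.2.2.1 a', ha'] at h1
      omega
    rcases unfold_adj_iff.mp hadj with ⟨x, hx⟩ | ⟨x, hx⟩
    swap
    · exfalso
      apply_fun List.length at hx
      simp [hlen, hlen'] at hx
    have hxval : x = bwd v g a := by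
      have hb : lastV (g.1 a) = x := by
        simp only [lastV]
        rw [List.getLast_congr _ _ hx]
        exact List.getLast_append_of_ne_nil (by simp) (by simp)
      rw [bwd_apply, hb]
    have hdb : T.dist rT a = T.dist rT a' + 1 := by rw [ha, ha']
    rw [hx, hxval, ih a' ha', pathT_concat hT rT haa hdb]
    rw [SimpleGraph.Walk.support_map, SimpleGraph.Walk.support_map,
      SimpleGraph.Walk.support_concat, List.map_append, List.map_singleton]

lemma DH_sigma_ext {v w : V} (h : v = w) (a : DH T rT G d v) (b : DH T rT G d w)
    (hab : ∀ x, (a.1 x).1 = (b.1 x).1) :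
    (⟨v, a⟩ : Σ u : V, DH T rT G d u) = ⟨w, b⟩ := by
  subst h
  exact congrArg (Sigma.mk v) (Subtype.ext (funext fun x => Subtype.ext (hab x)))

/-- The main equivalence. -/
noncomputable def mainEquiv (hdd : ∃ a, T.dist rT a = d) :
    (T →g G) ≃ Σ v : V, DH T rT G d v where
  toFun := fwd hT hle hdd
  invFun x := bwd x.1 x.2
  left_inv f := by
    ext a
    show lastV (fwdNode hT hle f a) = f a
    exact lastV_fwdNode hT hle f a
  right_inv x := by
    obtain ⟨v, g⟩ := x
    exact DH_sigma_ext (bwd_rT hT v g) _ g fun a => by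
      rw [fwdNode_val]
      exact (bwd_val hT v g (T.dist rT a) a rfl).symm

end Main

theorem stmt15 {α V : Type*} [Fintype α] [Fintype V]
    (T : SimpleGraph α) (rT : α) (hT : T.IsTree) (d : ℕ)
    (hdepth : (∀ a, T.dist rT a ≤ d) ∧ (∃ a, T.dist rT a = d))
    (G : SimpleGraph V) :
    homCount T G = ∑ v : V, dhomCount T rT (unfoldTree G v d) (unfoldRoot G v d) := by
  classical
  have hcard : ∀ v : V, dhomCount T rT (unfoldTree G v d) (unfoldRoot G v d) =
      Nat.card (DH T rT G d v) := fun v => rfl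
  have hfin : ∀ v : V, Finite (DH T rT G d v) := by
    intro v
    unfold DH
    infer_instance
  haveI := hfin
  haveI : ∀ v : V, Fintype (DH T rT G d v) := fun v => Fintype.ofFinite _
  have hGfin : Finite (T →g G) :=
    Finite.of_injective (fun f : T →g G => (f : α → V)) DFunLike.coe_injective
  rw [homCount, Nat.card_congr (mainEquiv hT hdepth.1 hdepth.2)]
  rw [Nat.card_eq_fintype_card, Fintype.card_sigma]
  refine Finset.sum_congr rfl fun v _ => ?_
  rw [hcard v, Nat.card_eq_fintype_card]
end

section
/- Let G and H be finite simple graphs. Color refinement distinguishes G and H if and only if there exists a d ∈ ℕ such that the multiset of rooted-isomorphism classes {{[T(G,v)_{≤d}] : v ∈ V(G)}} differs from the multiset {{[T(H,w)_{≤d}] : w ∈ V(H)}}. -/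
/-- The type of colors after `i` rounds of color refinement. -/
def CRColor : ℕ → Type
  | 0 => Unit
  | (i + 1) => Multiset (CRColor i)

/-- The coloring computed by color refinement after `i` rounds. -/
def crColoring {V : Type*} [Fintype V] (G : SimpleGraph V) [DecidableRel G.Adj] :
    (i : ℕ) → V → CRColor i
  | 0, _ => ()
  | (i + 1), v => (G.neighborFinset v).val.map (crColoring G i)

/-- Color refinement distinguishes `G` and `H` if after some number of rounds the
multisets of colors of the two graphs differ. -/
def crDistinguishes {V W : Type*} [Fintype V] [Fintype W]
    (G : SimpleGraph V) (H : SimpleGraph W)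
    [DecidableRel G.Adj] [DecidableRel H.Adj] : Prop :=
  ∃ i : ℕ,
    (Finset.univ.val.map (crColoring G i)) ≠ (Finset.univ.val.map (crColoring H i))

instance crColorDecEq : ∀ i, DecidableEq (CRColor i)
  | 0 => inferInstanceAs (DecidableEq Unit)
  | (i+1) => letI := crColorDecEq i
             inferInstanceAs (DecidableEq (Multiset (CRColor i)))

theorem multiset_map_eq_iff {A B C : Type*} [Fintype A] [Fintype B] [DecidableEq C]
    (f : A → C) (g : B → C) :
    Finset.univ.val.map f = Finset.univ.val.map g ↔ ∃ σ : A ≃ B, ∀ a, f a = g (σ a) := by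
  constructor
  · intro h
    have key : ∀ c, Fintype.card {a : A // f a = c} = Fintype.card {b : B // g b = c} := by
      intro c
      have h1 := congrArg (Multiset.count c) h
      rw [Multiset.count_map, Multiset.count_map] at h1
      rw [Fintype.card_subtype, Fintype.card_subtype]
      simpa [Finset.filter, Finset.card, eq_comm] using h1
    have e : ∀ c, {a : A // f a = c} ≃ {b : B // g b = c} :=
      fun c => Fintype.equivOfCardEq (key c)
    exact ⟨Equiv.ofFiberEquiv e, fun a => (Equiv.ofFiberEquiv_map e a).symm⟩
  · rintro ⟨σ, hσ⟩
    have h2 : Finset.univ.val.map σ = Finset.univ.val := by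
      have := congrArg Finset.val (Finset.map_univ_equiv σ)
      simpa [Finset.map_val] using this
    calc Finset.univ.val.map f = (Finset.univ.val.map σ).map g := by
          rw [Multiset.map_map]; exact Multiset.map_congr rfl (fun a _ => hσ a)
      _ = Finset.univ.val.map g := by rw [h2]

theorem multiset_map_eq_iff' {A B C : Type*} [DecidableEq C] (s : Finset A) (t : Finset B)
    (f : A → C) (g : B → C) :
    s.val.map f = t.val.map g ↔
      ∃ σ : {a // a ∈ s} ≃ {b // b ∈ t}, ∀ a : {a // a ∈ s}, f a.1 = g (σ a).1 := by
  have hs : s.val.map f = Finset.univ.val.map (fun a : {a // a ∈ s} => f a.1) := by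
    rw [Finset.univ_eq_attach, Finset.attach_val]
    exact (Multiset.attach_map_val' s.val f).symm
  have ht : t.val.map g = Finset.univ.val.map (fun b : {b // b ∈ t} => g b.1) := by
    rw [Finset.univ_eq_attach, Finset.attach_val]
    exact (Multiset.attach_map_val' t.val g).symm
  rw [hs, ht, multiset_map_eq_iff]

namespace CRAux

variable {V : Type*} {G : SimpleGraph V} {v u : V} {d : ℕ}

lemma head_cons (n : UNode G v d) : n.1 = v :: n.1.tail := by
  obtain ⟨l, h1, -, -⟩ := n
  cases l with
  | nil => simp at h1
  | cons a t => simp only [List.head?_cons, Option.some.injEq] at h1; subst h1; rfl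

lemma node_ne_nil (n : UNode G v d) : n.1 ≠ [] := by
  rw [head_cons n]; simp

/-- A node of `UNode G v d` of length `1` is the root. -/
lemma eq_root_of_len_one (n : UNode G v d) (h : n.1.tail = []) :
    n = unfoldRoot G v d := by
  apply Subtype.ext
  rw [head_cons n, h]; rfl

lemma unfold_adj_iff {a b : UNode G v d} :
    (unfoldTree G v d).Adj a b ↔ (∃ x, b.1 = a.1 ++ [x]) ∨ ∃ x, a.1 = b.1 ++ [x] := by
  rw [unfoldTree, SimpleGraph.fromRel_adj]
  constructor
  · rintro ⟨-, h⟩; exact h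
  · intro h
    refine ⟨?_, h⟩
    rintro rfl
    rcases h with ⟨x, hx⟩ | ⟨x, hx⟩ <;>
      · have := congrArg List.length hx
        simp at this

/-- Attaching the vertex `v` in front of a depth-`d` walk from a neighbor `u`. -/
def consNode (hu : G.Adj v u) (l : UNode G u d) : UNode G v (d+1) :=
  ⟨v :: l.1, by
    obtain ⟨h1, h2, h3⟩ := l.2
    refine ⟨rfl, ?_, by simpa using Nat.succ_le_succ h3⟩
    refine List.isChain_cons.mpr ?_
    refine ⟨fun y hy => ?_, h2⟩
    rw [h1] at hy
    obtain rfl : y = u := by simpa using hy.symm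
    exact hu⟩

@[simp] lemma consNode_val (hu : G.Adj v u) (l : UNode G u d) :
    (consNode hu l).1 = v :: l.1 := rfl

lemma consNode_inj (hu : G.Adj v u) {l l' : UNode G u d}
    (h : consNode hu l = consNode hu l') : l = l' := by
  apply Subtype.ext
  have := congrArg Subtype.val h
  simpa using this

/-- Every non-root node is a `consNode`. -/
lemma node_rec (n : UNode G v (d+1)) :
    n = unfoldRoot G v (d+1) ∨
      ∃ u, ∃ hu : G.Adj v u, ∃ l : UNode G u d, n = consNode hu l := by
  rcases eq_or_ne n.1.tail [] with h | h
  · exact Or.inl (eq_root_of_len_one n h)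
  · right
    obtain ⟨h1, h2, h3⟩ := n.2
    obtain ⟨u, t', ht⟩ : ∃ u t', n.1.tail = u :: t' := by
      cases hx : n.1.tail with
      | nil => exact absurd hx h
      | cons a b => exact ⟨a, b, rfl⟩
    have hn : n.1 = v :: u :: t' := by rw [head_cons n, ht]
    have hchain : (v :: u :: t').Chain' G.Adj := hn ▸ h2
    have hadj : G.Adj v u := (List.isChain_cons_cons.mp hchain).1
    have hlen : (u :: t').length ≤ d + 1 := by
      have := hn ▸ h3
      simpa using this
    exact ⟨u, hadj, ⟨u :: t', rfl, (List.isChain_cons_cons.mp hchain).2, hlen⟩,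
      Subtype.ext (by rw [hn]; rfl)⟩

/-- Adjacency between two cons nodes with the same first step. -/
lemma consNode_adj_iff (hu : G.Adj v u) {l l' : UNode G u d} :
    (unfoldTree G v (d+1)).Adj (consNode hu l) (consNode hu l') ↔
      (unfoldTree G u d).Adj l l' := by
  rw [unfold_adj_iff, unfold_adj_iff]
  simp

/-- Cons nodes with different first steps are not adjacent. -/
lemma consNode_not_adj {u' : V} (hu : G.Adj v u) (hu' : G.Adj v u')
    (hne : u ≠ u') (l : UNode G u d) (l' : UNode G u' d) :
    ¬ (unfoldTree G v (d+1)).Adj (consNode hu l) (consNode hu' l') := by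
  rw [unfold_adj_iff]
  rintro (⟨x, hx⟩ | ⟨x, hx⟩) <;>
    simp only [consNode_val, List.cons_append, List.cons.injEq, true_and] at hx
  · apply hne
    rw [head_cons l', head_cons l] at hx
    simp only [List.cons_append, List.cons.injEq] at hx
    exact hx.1.symm
  · apply hne
    rw [head_cons l', head_cons l] at hx
    simp only [List.cons_append, List.cons.injEq] at hx
    exact hx.1

lemma adj_of_mem_nf {W : Type*} {H : SimpleGraph W} {w u' : W} [Fintype W]
    [DecidableRel H.Adj] (h : u' ∈ H.neighborFinset w) : H.Adj w u' :=
  (H.mem_neighborFinset w u').mp h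

lemma mem_nf_of_adj {W : Type*} {H : SimpleGraph W} {w u' : W} [Fintype W]
    [DecidableRel H.Adj] (h : H.Adj w u') : u' ∈ H.neighborFinset w :=
  (H.mem_neighborFinset w u').mpr h

lemma head_eq_of_val_eq {W : Type*} {H : SimpleGraph W} {a a' : W} {m : UNode H a d}
    {m' : UNode H a' d} (h : m.1 = m'.1) : a = a' := by
  have h1 := head_cons m
  have h2 := head_cons m'
  rw [h, h2] at h1
  exact (List.cons.injEq _ _ _ _ ▸ h1).1.symm

lemma unique_node0 (n : UNode G v 0) : n = unfoldRoot G v 0 := by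
  apply eq_root_of_len_one
  have hlen := n.2.2.2
  cases hx : n.1.tail with
  | nil => rfl
  | cons a b =>
    rw [head_cons n, hx] at hlen
    simp at hlen

def iso0 {W : Type*} {H : SimpleGraph W} {w : W} :
    unfoldTree G v 0 ≃g unfoldTree H w 0 where
  toFun := fun _ => unfoldRoot H w 0
  invFun := fun _ => unfoldRoot G v 0
  left_inv := fun n => (unique_node0 n).symm
  right_inv := fun m => (unique_node0 m).symm
  map_rel_iff' := by
    intro a b
    rw [unique_node0 a, unique_node0 b]
    exact iff_of_false (unfoldTree H w 0).irrefl (unfoldTree G v 0).irrefl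

section Glue

variable {W : Type*} {H : SimpleGraph W} {w : W}
variable [Fintype V] [Fintype W] [DecidableRel G.Adj] [DecidableRel H.Adj]

open Classical in
noncomputable def glue
    (σ : {u // u ∈ G.neighborFinset v} ≃ {u' // u' ∈ H.neighborFinset w})
    (e : ∀ x : {u // u ∈ G.neighborFinset v},
        unfoldTree G x.1 d ≃g unfoldTree H (σ x).1 d)
    (n : UNode G v (d+1)) : UNode H w (d+1) :=
  if h : n.1.tail = [] then unfoldRoot H w (d+1)
  else
    let x : {u // u ∈ G.neighborFinset v} :=
      ⟨n.1.tail.head h, by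
        apply mem_nf_of_adj
        have hc := n.2.2.1
        rw [head_cons n] at hc
        exact (List.isChain_cons.mp hc).1 _ (List.head?_eq_head h)⟩
    consNode (adj_of_mem_nf (σ x).2)
      ((e x) ⟨n.1.tail, List.head?_eq_head h, (by
          have hc := n.2.2.1
          rw [head_cons n] at hc
          exact hc.tail), by
        have := n.2.2.2
        rw [head_cons n] at this
        simpa using this⟩)

variable {σ : {u // u ∈ G.neighborFinset v} ≃ {u' // u' ∈ H.neighborFinset w}}
  {e : ∀ x : {u // u ∈ G.neighborFinset v},
      unfoldTree G x.1 d ≃g unfoldTree H (σ x).1 d}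

lemma iso_val_congr {x x' : {u // u ∈ G.neighborFinset v}} (hxx : x = x')
    {m : UNode G x.1 d} {m' : UNode G x'.1 d} (hm : m.1 = m'.1) :
    ((e x) m).1 = ((e x') m').1 := by
  subst hxx
  rw [Subtype.ext hm]

lemma glue_root : glue σ e (unfoldRoot G v (d+1)) = unfoldRoot H w (d+1) :=
  dif_pos rfl

lemma glue_consNode (hu : G.Adj v u) (l : UNode G u d) :
    glue σ e (consNode hu l) =
      consNode (adj_of_mem_nf (σ ⟨u, mem_nf_of_adj hu⟩).2)
        ((e ⟨u, mem_nf_of_adj hu⟩) l) := by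
  rw [glue, dif_neg (show (consNode hu l).1.tail ≠ [] from node_ne_nil l)]
  apply Subtype.ext
  exact congrArg (List.cons w) (iso_val_congr (Subtype.ext (by
    show l.1.head (node_ne_nil l) = u
    have h := List.head?_eq_head (l := l.1) (node_ne_nil l)
    rw [l.2.1] at h
    exact (Option.some.injEq _ _ ▸ h).symm)) rfl)

lemma glue_injective : Function.Injective (glue σ e) := by
  intro n n' h
  rcases node_rec n with rfl | ⟨u, hu, l, rfl⟩ <;>
    rcases node_rec n' with rfl | ⟨u', hu', l', rfl⟩
  · rfl
  · rw [glue_root, glue_consNode hu' l'] at h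
    have := congrArg (fun m => m.1.tail) h
    simp only [consNode_val] at this
    exact absurd this.symm (node_ne_nil _)
  · rw [glue_root, glue_consNode hu l] at h
    have := congrArg (fun m => m.1.tail) h
    simp only [consNode_val] at this
    exact absurd this (node_ne_nil _)
  · rw [glue_consNode hu l, glue_consNode hu' l'] at h
    have hval := congrArg Subtype.val h
    simp only [consNode_val, List.cons.injEq, true_and] at hval
    have hσ : (σ ⟨u, mem_nf_of_adj hu⟩).1 = (σ ⟨u', mem_nf_of_adj hu'⟩).1 :=
      head_eq_of_val_eq hval
    have hx : (⟨u, mem_nf_of_adj hu⟩ : {u // u ∈ G.neighborFinset v}) =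
        ⟨u', mem_nf_of_adj hu'⟩ := σ.injective (Subtype.ext hσ)
    obtain rfl : u = u' := congrArg Subtype.val hx
    have hl : l = l' := (e ⟨u, mem_nf_of_adj hu⟩).toEquiv.injective (Subtype.ext hval)
    rw [hl]

lemma glue_surjective : Function.Surjective (glue σ e) := by
  intro m
  rcases node_rec m with rfl | ⟨u', hu', l', rfl⟩
  · exact ⟨unfoldRoot G v (d+1), glue_root⟩
  · obtain ⟨x, hx⟩ : ∃ x, σ x = ⟨u', mem_nf_of_adj hu'⟩ :=
      ⟨σ.symm ⟨u', mem_nf_of_adj hu'⟩, Equiv.apply_symm_apply σ _⟩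
    have hx1 : (σ x).1 = u' := congrArg Subtype.val hx
    have hadj : G.Adj v x.1 := adj_of_mem_nf x.2
    set M : UNode H (σ x).1 d :=
      ⟨l'.1, by rw [hx1]; exact l'.2.1, l'.2.2.1, l'.2.2.2⟩ with hM
    refine ⟨consNode hadj ((e x).symm M), ?_⟩
    apply Subtype.ext
    rw [glue_consNode hadj]
    show w :: ((e ⟨x.1, mem_nf_of_adj hadj⟩) ((e x).symm M)).1 = w :: l'.1
    refine congrArg (List.cons w) ?_
    have h5 : ((e ⟨x.1, mem_nf_of_adj hadj⟩) ((e x).symm M)).1 =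
        ((e x) ((e x).symm M)).1 := iso_val_congr (Subtype.ext rfl) rfl
    rw [h5, RelIso.apply_symm_apply]

lemma glue_adj
    (he : ∀ x, (e x) (unfoldRoot G x.1 d) = unfoldRoot H (σ x).1 d) (n n' : UNode G v (d+1)) :
    (unfoldTree H w (d+1)).Adj (glue σ e n) (glue σ e n') ↔
      (unfoldTree G v (d+1)).Adj n n' := by
  have key : ∀ (u : V) (hu : G.Adj v u) (l : UNode G u d),
      (unfoldTree H w (d+1)).Adj (glue σ e (unfoldRoot G v (d+1)))
          (glue σ e (consNode hu l)) ↔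
        (unfoldTree G v (d+1)).Adj (unfoldRoot G v (d+1)) (consNode hu l) := by
    intro u hu l
    rw [glue_root, glue_consNode hu l]
    have hxadj : G.Adj v u := hu
    rw [unfold_adj_iff, unfold_adj_iff]
    simp only [consNode_val]
    constructor
    · rintro (⟨y, hy⟩ | ⟨y, hy⟩)
      · left
        have h1 : ((e ⟨u, mem_nf_of_adj hu⟩) l).1 = [y] := by
          have := congrArg List.tail hy
          simpa [unfoldRoot] using this
        have h2 : (e ⟨u, mem_nf_of_adj hu⟩) l =
            unfoldRoot H (σ ⟨u, mem_nf_of_adj hu⟩).1 d :=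
          eq_root_of_len_one _ (by rw [h1]; rfl)
        have h3 : l = unfoldRoot G (⟨u, mem_nf_of_adj hu⟩ :
            {u // u ∈ G.neighborFinset v}).1 d :=
          (e ⟨u, mem_nf_of_adj hu⟩).toEquiv.injective
            (h2.trans (he ⟨u, mem_nf_of_adj hu⟩).symm)
        refine ⟨u, ?_⟩
        have h4 := congrArg Subtype.val h3
        show (consNode hu l).1 = _
        rw [consNode_val, h4]
        rfl
      · exfalso
        have := congrArg List.length hy
        simp [unfoldRoot] at this
    · rintro (⟨y, hy⟩ | ⟨y, hy⟩)
      · left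
        have h1 : l.1 = [y] := by
          have := congrArg List.tail hy
          simpa [unfoldRoot] using this
        have h2 : l = unfoldRoot G (⟨u, mem_nf_of_adj hu⟩ :
            {u // u ∈ G.neighborFinset v}).1 d :=
          eq_root_of_len_one _ (by rw [h1]; rfl)
        refine ⟨(σ ⟨u, mem_nf_of_adj hu⟩).1, ?_⟩
        show (consNode (adj_of_mem_nf (σ ⟨u, mem_nf_of_adj hu⟩).2) ((e ⟨u, mem_nf_of_adj hu⟩) l)).1 = _
        rw [consNode_val, h2, he ⟨u, mem_nf_of_adj hu⟩]
        rfl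
      · exfalso
        have := congrArg List.length hy
        simp [unfoldRoot] at this
  rcases node_rec n with rfl | ⟨u, hu, l, rfl⟩ <;>
    rcases node_rec n' with rfl | ⟨u', hu', l', rfl⟩
  · rw [glue_root]
    exact iff_of_false (unfoldTree H w (d+1)).irrefl (unfoldTree G v (d+1)).irrefl
  · exact key u' hu' l'
  · rw [SimpleGraph.adj_comm, SimpleGraph.adj_comm (unfoldTree G v (d+1))]
    exact key u hu l
  · rcases eq_or_ne u u' with rfl | hne
    · rw [glue_consNode hu l, glue_consNode hu' l']
      have hpe : (⟨u, mem_nf_of_adj hu'⟩ : {u // u ∈ G.neighborFinset v}) =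
          ⟨u, mem_nf_of_adj hu⟩ := rfl
      rw [consNode_adj_iff, consNode_adj_iff]
      exact (e ⟨u, mem_nf_of_adj hu⟩).map_rel_iff
    · rw [glue_consNode hu l, glue_consNode hu' l']
      have hxne : (⟨u, mem_nf_of_adj hu⟩ : {u // u ∈ G.neighborFinset v}) ≠
          ⟨u', mem_nf_of_adj hu'⟩ := fun hcon => hne (congrArg Subtype.val hcon)
      have hσne : (σ ⟨u, mem_nf_of_adj hu⟩).1 ≠ (σ ⟨u', mem_nf_of_adj hu'⟩).1 :=
        fun hcon => hxne (σ.injective (Subtype.ext hcon))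
      exact iff_of_false (consNode_not_adj _ _ hσne _ _) (consNode_not_adj _ _ hne _ _)

/-- The glued isomorphism. -/
noncomputable def glueIso
    (σ : {u // u ∈ G.neighborFinset v} ≃ {u' // u' ∈ H.neighborFinset w})
    (e : ∀ x : {u // u ∈ G.neighborFinset v},
        unfoldTree G x.1 d ≃g unfoldTree H (σ x).1 d)
    (he : ∀ x, (e x) (unfoldRoot G x.1 d) = unfoldRoot H (σ x).1 d) :
    unfoldTree G v (d+1) ≃g unfoldTree H w (d+1) where
  toEquiv := Equiv.ofBijective (glue σ e) ⟨glue_injective, glue_surjective⟩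
  map_rel_iff' := by intro a b; exact glue_adj he a b

lemma glueIso_root
    (σ : {u // u ∈ G.neighborFinset v} ≃ {u' // u' ∈ H.neighborFinset w})
    (e : ∀ x : {u // u ∈ G.neighborFinset v},
        unfoldTree G x.1 d ≃g unfoldTree H (σ x).1 d)
    (he : ∀ x, (e x) (unfoldRoot G x.1 d) = unfoldRoot H (σ x).1 d) :
    (glueIso σ e he) (unfoldRoot G v (d+1)) = unfoldRoot H w (d+1) := glue_root (σ := σ) (e := e)

end Glue

section Branch

variable {W : Type*} {H : SimpleGraph W} {w : W}

/-- The depth-1 node corresponding to a neighbor `u` of `v`. -/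
noncomputable abbrev node2 (hu : G.Adj v u) : UNode G v (d+1) :=
  consNode hu (unfoldRoot G u d)

lemma node2_val (hu : G.Adj v u) : (node2 (d := d) hu).1 = [v, u] := rfl

lemma adj_root_iff {m : UNode G v (d+1)} :
    (unfoldTree G v (d+1)).Adj (unfoldRoot G v (d+1)) m ↔
      ∃ u, ∃ hu : G.Adj v u, m = node2 hu := by
  constructor
  · intro h
    rw [unfold_adj_iff] at h
    rcases h with ⟨x, hx⟩ | ⟨x, hx⟩
    · have hx' : m.1 = [v, x] := hx
      have hadj : G.Adj v x := by
        have := m.2.2.1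
        rw [hx'] at this
        exact List.isChain_pair.mp this
      exact ⟨x, hadj, Subtype.ext hx'⟩
    · exfalso
      have hlen := congrArg List.length hx
      rw [head_cons m] at hlen
      simp [unfoldRoot] at hlen
  · rintro ⟨u, hu, rfl⟩
    rw [unfold_adj_iff]
    exact Or.inl ⟨u, rfl⟩

/-- One step off the root. -/
def offRoot (G : SimpleGraph V) (v : V) (d : ℕ) :
    UNode G v (d+1) → UNode G v (d+1) → Prop := fun a b =>
  (unfoldTree G v (d+1)).Adj a b ∧ a ≠ unfoldRoot G v (d+1) ∧ b ≠ unfoldRoot G v (d+1)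

lemma ne_root_of_two_le {n : UNode G v (d+1)} (h : 2 ≤ n.1.length) :
    n ≠ unfoldRoot G v (d+1) := by
  intro hcon
  rw [hcon] at h
  simp [unfoldRoot] at h

lemma reach_iff_prefix (hu : G.Adj v u) (m : UNode G v (d+1)) :
    Relation.ReflTransGen (offRoot G v d) (node2 hu) m ↔ [v, u] <+: m.1 := by
  constructor
  · intro h
    induction h with
    | refl => exact List.prefix_refl _
    | tail h1 h2 ih =>
      rename_i b c
      rcases (unfold_adj_iff.mp h2.1) with ⟨x, hx⟩ | ⟨x, hx⟩
      · exact ih.trans (hx ▸ List.prefix_append _ _)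
      · -- c is a proper prefix of b
        have hpre : c.1 <+: b.1 := hx ▸ List.prefix_append _ _
        have hlen : 2 ≤ c.1.length := by
          rcases Nat.lt_or_ge c.1.length 2 with hl | hl
          · exfalso
            apply h2.2.2
            apply eq_root_of_len_one
            have hc := head_cons c
            cases hx2 : c.1.tail with
            | nil => rfl
            | cons a t =>
              rw [hc, hx2] at hl
              simp at hl
          · exact hl
        exact List.prefix_of_prefix_length_le ih hpre (by simpa using hlen)
  · rintro ⟨r, hr⟩
    induction r using List.reverseRecOn generalizing m with
    | nil =>
      have : m = node2 hu := Subtype.ext (by rw [← hr]; rfl)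
      rw [this]
    | append_singleton r x ih =>
      have hval : m.1 = ([v, u] ++ r) ++ [x] := by rw [← hr]; simp
      have hm' : ([v, u] ++ r).head? = some v ∧ ([v, u] ++ r).Chain' G.Adj ∧
          ([v, u] ++ r).length ≤ d + 1 + 1 := by
        refine ⟨rfl, m.2.2.1.prefix ⟨[x], hval.symm⟩, ?_⟩
        have := m.2.2.2
        rw [hval] at this
        simp at this ⊢
        omega
      have hadj : (unfoldTree G v (d+1)).Adj ⟨[v, u] ++ r, hm'⟩ m := by
        exact unfold_adj_iff.mpr (Or.inl ⟨x, hval⟩)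
      refine Relation.ReflTransGen.tail (ih ⟨[v, u] ++ r, hm'⟩ rfl) ⟨hadj, ?_, ?_⟩
      · exact ne_root_of_two_le (by show 2 ≤ ([v, u] ++ r).length; simp)
      · exact ne_root_of_two_le (by rw [hval]; simp)

lemma reach_map (e : unfoldTree G v (d+1) ≃g unfoldTree H w (d+1))
    (hroot : e (unfoldRoot G v (d+1)) = unfoldRoot H w (d+1)) {a b : UNode G v (d+1)}
    (h : Relation.ReflTransGen (offRoot G v d) a b) :
    Relation.ReflTransGen (offRoot H w d) (e a) (e b) := by
  induction h with
  | refl => exact Relation.ReflTransGen.refl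
  | tail h1 h2 ih =>
    refine Relation.ReflTransGen.tail ih ⟨e.map_rel_iff.mpr h2.1, ?_, ?_⟩
    · intro hcon
      exact h2.2.1 (e.toEquiv.injective (hcon.trans hroot.symm))
    · intro hcon
      exact h2.2.2 (e.toEquiv.injective (hcon.trans hroot.symm))

lemma prefix_map (e : unfoldTree G v (d+1) ≃g unfoldTree H w (d+1))
    (hroot : e (unfoldRoot G v (d+1)) = unfoldRoot H w (d+1))
    {u : V} {u' : W} (hu : G.Adj v u) (hu' : H.Adj w u')
    (h2 : e (node2 hu) = node2 hu') {m : UNode G v (d+1)} (hm : [v, u] <+: m.1) :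
    [w, u'] <+: (e m).1 := by
  have h3 := reach_map e hroot ((reach_iff_prefix hu m).mpr hm)
  rw [h2] at h3
  exact (reach_iff_prefix hu' (e m)).mp h3

/-- Strip the root vertex from a node in the branch at `u'`. -/
def stripNode {u' : W} (m : UNode H w (d+1)) (h : [w, u'] <+: m.1) : UNode H u' d :=
  ⟨m.1.tail, by
    obtain ⟨r, hr⟩ := h
    refine ⟨?_, m.2.2.1.tail, ?_⟩
    · rw [← hr]; rfl
    · have := m.2.2.2
      rw [← hr] at this ⊢
      simp at this ⊢
      omega⟩

lemma cons_strip {u' : W} (hu' : H.Adj w u') (m : UNode H w (d+1)) (h : [w, u'] <+: m.1) :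
    consNode hu' (stripNode m h) = m := by
  apply Subtype.ext
  rw [consNode_val]
  show w :: m.1.tail = m.1
  exact (head_cons m).symm

lemma strip_adj_iff {u' : W} (hu' : H.Adj w u') {m m' : UNode H w (d+1)}
    (h : [w, u'] <+: m.1) (h' : [w, u'] <+: m'.1) :
    (unfoldTree H u' d).Adj (stripNode m h) (stripNode m' h') ↔
      (unfoldTree H w (d+1)).Adj m m' := by
  conv_rhs => rw [← cons_strip hu' m h, ← cons_strip hu' m' h']
  rw [consNode_adj_iff]

lemma node2_prefix (hu : G.Adj v u) (l : UNode G u d) :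
    [v, u] <+: (consNode hu l).1 := by
  rw [consNode_val, head_cons l]
  exact ⟨l.1.tail, rfl⟩

/-- The restriction of a rooted isomorphism of tree unfoldings to a branch. -/
noncomputable def branchIso (e : unfoldTree G v (d+1) ≃g unfoldTree H w (d+1))
    (hroot : e (unfoldRoot G v (d+1)) = unfoldRoot H w (d+1))
    {u : V} {u' : W} (hu : G.Adj v u) (hu' : H.Adj w u')
    (h2 : e (node2 hu) = node2 hu') :
    unfoldTree G u d ≃g unfoldTree H u' d where
  toFun := fun l => stripNode (e (consNode hu l))
    (prefix_map e hroot hu hu' h2 (node2_prefix hu l))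
  invFun := fun m => stripNode (e.symm (consNode hu' m))
    (prefix_map e.symm
      (by rw [← hroot, RelIso.symm_apply_apply])
      hu' hu (by rw [← h2, RelIso.symm_apply_apply]) (node2_prefix hu' m))
  left_inv := by
    intro l
    apply Subtype.ext
    show (e.symm (consNode hu' (stripNode (e (consNode hu l)) _))).1.tail = l.1
    rw [cons_strip, RelIso.symm_apply_apply]
    rfl
  right_inv := by
    intro m
    apply Subtype.ext
    show (e (consNode hu (stripNode (e.symm (consNode hu' m)) _))).1.tail = m.1
    rw [cons_strip, RelIso.apply_symm_apply]
    rfl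
  map_rel_iff' := by
    intro l l'
    exact (strip_adj_iff hu' (prefix_map e hroot hu hu' h2 (node2_prefix hu l))
      (prefix_map e hroot hu hu' h2 (node2_prefix hu l'))).trans (e.map_rel_iff.trans (consNode_adj_iff hu))

lemma branchIso_root (e : unfoldTree G v (d+1) ≃g unfoldTree H w (d+1))
    (hroot : e (unfoldRoot G v (d+1)) = unfoldRoot H w (d+1))
    {u : V} {u' : W} (hu : G.Adj v u) (hu' : H.Adj w u')
    (h2 : e (node2 hu) = node2 hu') :
    (branchIso e hroot hu hu' h2) (unfoldRoot G u d) = unfoldRoot H u' d := by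
  apply Subtype.ext
  show (e (consNode hu (unfoldRoot G u d))).1.tail = [u']
  rw [show consNode hu (unfoldRoot G u d) = node2 hu from rfl, h2]
  rfl

end Branch

section Sigma

variable {W : Type*} {H : SimpleGraph W} {w : W}

lemma exists_image_node2 (e : unfoldTree G v (d+1) ≃g unfoldTree H w (d+1))
    (hroot : e (unfoldRoot G v (d+1)) = unfoldRoot H w (d+1)) (hu : G.Adj v u) :
    ∃ u', ∃ hu' : H.Adj w u', e (node2 hu) = node2 hu' := by
  have h1 : (unfoldTree G v (d+1)).Adj (unfoldRoot G v (d+1)) (node2 hu) :=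
    adj_root_iff.mpr ⟨u, hu, rfl⟩
  have h2 : (unfoldTree H w (d+1)).Adj (unfoldRoot H w (d+1)) (e (node2 hu)) := by
    rw [← hroot]
    exact e.map_rel_iff.mpr h1
  exact adj_root_iff.mp h2

variable [Fintype V] [Fintype W] [DecidableRel G.Adj] [DecidableRel H.Adj]

noncomputable def rootFun (e : unfoldTree G v (d+1) ≃g unfoldTree H w (d+1))
    (hroot : e (unfoldRoot G v (d+1)) = unfoldRoot H w (d+1))
    (x : {u // u ∈ G.neighborFinset v}) : {u' // u' ∈ H.neighborFinset w} :=
  ⟨Classical.choose (exists_image_node2 e hroot (adj_of_mem_nf x.2)),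
    mem_nf_of_adj (Classical.choose
      (Classical.choose_spec (exists_image_node2 e hroot (adj_of_mem_nf x.2))))⟩

lemma rootFun_spec (e : unfoldTree G v (d+1) ≃g unfoldTree H w (d+1))
    (hroot : e (unfoldRoot G v (d+1)) = unfoldRoot H w (d+1))
    (x : {u // u ∈ G.neighborFinset v}) :
    e (node2 (adj_of_mem_nf x.2)) = node2 (adj_of_mem_nf (rootFun e hroot x).2) :=
  Classical.choose_spec
    (Classical.choose_spec (exists_image_node2 e hroot (adj_of_mem_nf x.2)))

lemma symm_root (e : unfoldTree G v (d+1) ≃g unfoldTree H w (d+1))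
    (hroot : e (unfoldRoot G v (d+1)) = unfoldRoot H w (d+1)) :
    e.symm (unfoldRoot H w (d+1)) = unfoldRoot G v (d+1) := by
  rw [← hroot, RelIso.symm_apply_apply]

lemma second_eq {a b : V} {hu : G.Adj v a} {hu' : G.Adj v b}
    (h : node2 (d := d) hu = node2 hu') : a = b := by
  have h3 := congrArg Subtype.val h
  simp only [node2_val, List.cons.injEq, true_and] at h3
  exact h3.1

noncomputable def rootEquiv (e : unfoldTree G v (d+1) ≃g unfoldTree H w (d+1))
    (hroot : e (unfoldRoot G v (d+1)) = unfoldRoot H w (d+1)) :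
    {u // u ∈ G.neighborFinset v} ≃ {u' // u' ∈ H.neighborFinset w} where
  toFun := rootFun e hroot
  invFun := rootFun e.symm (symm_root e hroot)
  left_inv := by
    intro x
    have s1 := rootFun_spec e hroot x
    have s2 := rootFun_spec e.symm (symm_root e hroot) (rootFun e hroot x)
    rw [← s1, RelIso.symm_apply_apply] at s2
    exact Subtype.ext (second_eq s2).symm
  right_inv := by
    intro y
    have s1 := rootFun_spec e.symm (symm_root e hroot) y
    have s2 := rootFun_spec e hroot (rootFun e.symm (symm_root e hroot) y)
    rw [← s1, RelIso.apply_symm_apply] at s2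
    exact Subtype.ext (second_eq s2).symm

end Sigma


theorem color_iff_iso {V W : Type*} [Fintype V] [Fintype W]
    (G : SimpleGraph V) (H : SimpleGraph W) [DecidableRel G.Adj] [DecidableRel H.Adj] :
    ∀ (d : ℕ) (v : V) (w : W),
      crColoring G d v = crColoring H d w ↔
        ∃ e : unfoldTree G v d ≃g unfoldTree H w d,
          e (unfoldRoot G v d) = unfoldRoot H w d := by
  intro d
  induction d with
  | zero =>
    intro v w
    constructor
    · intro _
      exact ⟨iso0, rfl⟩
    · intro _
      rfl
  | succ d ih =>
    intro v w
    constructor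
    · intro hcol
      have hcol' : (G.neighborFinset v).val.map (crColoring G d) =
          (H.neighborFinset w).val.map (crColoring H d) := hcol
      rw [multiset_map_eq_iff'] at hcol'
      obtain ⟨σ, hσ⟩ := hcol'
      choose f hf using fun x : {u // u ∈ G.neighborFinset v} =>
        (ih x.1 (σ x).1).mp (hσ x)
      exact ⟨glueIso σ f hf, glueIso_root σ f hf⟩
    · rintro ⟨e, hroot⟩
      show (G.neighborFinset v).val.map (crColoring G d) =
          (H.neighborFinset w).val.map (crColoring H d)
      rw [multiset_map_eq_iff']
      refine ⟨rootEquiv e hroot, fun x => ?_⟩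
      refine (ih x.1 ((rootEquiv e hroot) x).1).mpr ?_
      exact ⟨branchIso e hroot (adj_of_mem_nf x.2)
          (adj_of_mem_nf ((rootEquiv e hroot) x).2) (rootFun_spec e hroot x),
        branchIso_root e hroot (adj_of_mem_nf x.2)
          (adj_of_mem_nf ((rootEquiv e hroot) x).2) (rootFun_spec e hroot x)⟩

end CRAux

/-- Color refinement distinguishes `G` and `H` iff for some depth `d` the multisets
of rooted-isomorphism classes of the depth-`d` tree unfoldings differ, i.e. there is
no bijection between the vertex sets matching each vertex to a vertex with a
rooted-isomorphic unfolding. -/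
theorem stmt16 {V W : Type*} [Fintype V] [Fintype W]
    (G : SimpleGraph V) (H : SimpleGraph W)
    [DecidableRel G.Adj] [DecidableRel H.Adj] :
    crDistinguishes G H ↔
    ∃ d : ℕ, ¬ ∃ σ : V ≃ W, ∀ v : V,
      ∃ e : unfoldTree G v d ≃g unfoldTree H (σ v) d,
        e (unfoldRoot G v d) = unfoldRoot H (σ v) d := by
  unfold crDistinguishes
  apply exists_congr
  intro i
  apply not_congr
  rw [multiset_map_eq_iff]
  exact exists_congr fun σ => forall_congr' fun v => CRAux.color_iff_iso G H i v (σ v)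
end

section
/- Let k ≥ 1 be an integer and let G and H be finite simple graphs such that the system L^{k+1}_iso(G,H) has a real solution. Then for every finite simple graph F and every path decomposition P of F of width at most k, biso((F,P),G) = biso((F,P),H). -/
/-- `π ⊆ V × W` is a partial isomorphism from `G` to `H`. -/
def IsPartialIso {V W : Type*} (G : SimpleGraph V) (H : SimpleGraph W)
    (π : Finset (V × W)) : Prop :=
  ∀ p ∈ π, ∀ q ∈ π, (p.1 = q.1 ↔ p.2 = q.2) ∧ (G.Adj p.1 q.1 ↔ H.Adj p.2 q.2)

/-- `X` is a solution of the system `L^K_iso(G,H)`. -/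
def IsLisoSolution {V W : Type*} [Fintype V] [Fintype W] [DecidableEq V] [DecidableEq W]
    (K : ℕ) (G : SimpleGraph V) (H : SimpleGraph W) (X : Finset (V × W) → ℝ) : Prop :=
  (∀ π : Finset (V × W), π.card + 1 ≤ K → ∀ w : W,
      ∑ v : V, X (insert (v, w) π) = X π) ∧
  (∀ π : Finset (V × W), π.card + 1 ≤ K → ∀ v : V,
      ∑ w : W, X (insert (v, w) π) = X π) ∧
  (∀ π : Finset (V × W), π.card ≤ K → ¬ IsPartialIso G H π → X π = 0) ∧
  X ∅ = 1

/-- `bag : Fin r → Finset α` is a path decomposition of `F`. -/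
def IsPathDecomp {α : Type*} (F : SimpleGraph α) {r : ℕ} (bag : Fin r → Finset α) : Prop :=
  (∀ v : α, ∃ i, v ∈ bag i) ∧
  (∀ u v : α, F.Adj u v → ∃ i, u ∈ bag i ∧ v ∈ bag i) ∧
  (∀ (v : α) (i j l : Fin r), i ≤ j → j ≤ l → v ∈ bag i → v ∈ bag l → v ∈ bag j)

/-- The number of bag-wise isomorphic homomorphisms from `(F, bag)` to `G`:
homomorphisms `f` from `F` to `G` that are injective on every bag and induce an
isomorphism from `F[B]` onto `G[f(B)]` for every bag `B`. -/
noncomputable def bisoCount {α V : Type*} (F : SimpleGraph α) {r : ℕ}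
    (bag : Fin r → Finset α) (G : SimpleGraph V) : ℕ :=
  Nat.card {f : α → V //
    (∀ a b, F.Adj a b → G.Adj (f a) (f b)) ∧
    ∀ i : Fin r, Set.InjOn f (bag i) ∧
      ∀ a ∈ bag i, ∀ b ∈ bag i, (F.Adj a b ↔ G.Adj (f a) (f b))}

namespace Stmt18Aux

open Finset

attribute [local instance] Classical.propDecidable

/-- Functions that take the value `d` outside of `A`. -/
noncomputable def Fn {α β : Type*} [Fintype α] [DecidableEq α] [Fintype β] (A : Finset α) (d : β) : Finset (α → β) :=
  Finset.univ.filter fun η => ∀ a ∉ A, η a = d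

lemma mem_Fn {α β : Type*} [Fintype α] [DecidableEq α] [Fintype β] {A : Finset α} {d : β} {η : α → β} :
    η ∈ Fn A d ↔ ∀ a ∉ A, η a = d := by simp [Fn]

lemma Fn_empty {α β : Type*} [Fintype α] [DecidableEq α] [Fintype β] (d : β) :
    Fn (∅ : Finset α) d = {fun _ => d} := by
  ext η
  simp [mem_Fn, Finset.mem_singleton, funext_iff]

lemma sum_Fn_insert {α β M : Type*} [Fintype α] [DecidableEq α] [Fintype β] [AddCommMonoid M]
    {A : Finset α} {a : α} (ha : a ∉ A) (d : β) (f : (α → β) → M) :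
    ∑ η ∈ Fn (insert a A) d, f η
      = ∑ w : β, ∑ η ∈ Fn A d, f (Function.update η a w) := by
  rw [← Finset.sum_product' (s := Finset.univ) (t := Fn A d)
    (f := fun w η => f (Function.update η a w))]
  refine Finset.sum_bij' (fun η _ => ((η a, Function.update η a d) : β × (α → β)))
    (fun q _ => Function.update q.2 a q.1) ?_ ?_ ?_ ?_ ?_
  · intro η hη
    rw [Finset.mem_product]
    refine ⟨Finset.mem_univ _, mem_Fn.2 fun b hb => ?_⟩
    show Function.update η a d b = d
    by_cases hba : b = a
    · subst hba; simp
    · rw [Function.update_of_ne hba]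
      exact mem_Fn.1 hη b (by simp [hba, hb])
  · intro q hq
    rw [Finset.mem_product] at hq
    refine mem_Fn.2 fun b hb => ?_
    show Function.update q.2 a q.1 b = d
    have hba : b ≠ a := fun h => hb (h ▸ Finset.mem_insert_self a A)
    rw [Function.update_of_ne hba]
    exact mem_Fn.1 hq.2 b (fun h => hb (Finset.mem_insert_of_mem h))
  · intro η hη
    show Function.update (Function.update η a d) a (η a) = η
    funext b
    by_cases hba : b = a
    · subst hba; simp
    · simp [Function.update_of_ne hba]
  · intro q hq
    rw [Finset.mem_product] at hq
    show ((Function.update q.2 a q.1) a, Function.update (Function.update q.2 a q.1) a d) = q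
    have h2 : q.2 a = d := mem_Fn.1 hq.2 a ha
    refine Prod.ext ?_ ?_
    · simp
    · show Function.update (Function.update q.2 a q.1) a d = q.2
      funext b
      by_cases hba : b = a
      · subst hba; simp [h2]
      · simp [Function.update_of_ne hba]
  · intro η hη
    show f η = f (Function.update (Function.update η a d) a (η a))
    congr 1
    funext b
    by_cases hba : b = a
    · subst hba; simp
    · simp [Function.update_of_ne hba]

variable {k : ℕ} {V W : Type*} [Fintype V] [Fintype W] [DecidableEq V] [DecidableEq W]
  {G : SimpleGraph V} {H : SimpleGraph W} {X : Finset (V × W) → ℝ}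

lemma sumOutW (hX : IsLisoSolution (k + 1) G H X)
    {α : Type*} [Fintype α] [DecidableEq α] (dW : W) (g : α → V) (A : Finset α) :
    ∀ π : Finset (V × W), π.card + A.card ≤ k + 1 →
      ∑ η ∈ Fn A dW, X (π ∪ A.image fun a => (g a, η a)) = X π := by
  induction A using Finset.induction_on with
  | empty => intro π hπ; simp [Fn_empty]
  | @insert a A ha ih =>
    intro π hπ
    rw [Finset.card_insert_of_notMem ha] at hπ
    rw [sum_Fn_insert ha dW]
    have key : ∀ w : W, ∀ η ∈ Fn A dW,
        (π ∪ (insert a A).image fun b => (g b, Function.update η a w b))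
          = insert (g a, w) (π ∪ A.image fun b => (g b, η b)) := by
      intro w η hη
      rw [Finset.image_insert, Function.update_self,
        Finset.image_congr (g := fun b => (g b, η b))
          (fun b hb => by
            have : b ≠ a := fun h => ha (h ▸ hb)
            rw [Function.update_of_ne this]),
        Finset.union_insert]
    calc ∑ w : W, ∑ η ∈ Fn A dW,
          X (π ∪ (insert a A).image fun b => (g b, Function.update η a w b))
        = ∑ η ∈ Fn A dW, ∑ w : W,
            X (insert (g a, w) (π ∪ A.image fun b => (g b, η b))) := by
          rw [Finset.sum_comm]
          exact Finset.sum_congr rfl fun η hη => Finset.sum_congr rfl fun w _ => by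
            rw [key w η hη]
      _ = ∑ η ∈ Fn A dW, X (π ∪ A.image fun b => (g b, η b)) := by
          refine Finset.sum_congr rfl fun η hη => ?_
          refine hX.2.1 _ ?_ (g a)
          have h1 : (π ∪ A.image fun b => (g b, η b)).card ≤ π.card + A.card :=
            le_trans (Finset.card_union_le _ _)
              (by exact Nat.add_le_add_left (Finset.card_image_le) _)
          omega
      _ = X π := ih π (by omega)

lemma sumOutV (hX : IsLisoSolution (k + 1) G H X)
    {α : Type*} [Fintype α] [DecidableEq α] (dV : V) (h : α → W) (A : Finset α) :
    ∀ π : Finset (V × W), π.card + A.card ≤ k + 1 →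
      ∑ γ ∈ Fn A dV, X (π ∪ A.image fun a => (γ a, h a)) = X π := by
  induction A using Finset.induction_on with
  | empty => intro π hπ; simp [Fn_empty]
  | @insert a A ha ih =>
    intro π hπ
    rw [Finset.card_insert_of_notMem ha] at hπ
    rw [sum_Fn_insert ha dV]
    have key : ∀ v : V, ∀ γ ∈ Fn A dV,
        (π ∪ (insert a A).image fun b => (Function.update γ a v b, h b))
          = insert (v, h a) (π ∪ A.image fun b => (γ b, h b)) := by
      intro v γ hγ
      rw [Finset.image_insert, Function.update_self,
        Finset.image_congr (g := fun b => (γ b, h b))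
          (fun b hb => by
            have : b ≠ a := fun hh => ha (hh ▸ hb)
            rw [Function.update_of_ne this]),
        Finset.union_insert]
    calc ∑ v : V, ∑ γ ∈ Fn A dV,
          X (π ∪ (insert a A).image fun b => (Function.update γ a v b, h b))
        = ∑ γ ∈ Fn A dV, ∑ v : V,
            X (insert (v, h a) (π ∪ A.image fun b => (γ b, h b))) := by
          rw [Finset.sum_comm]
          exact Finset.sum_congr rfl fun γ hγ => Finset.sum_congr rfl fun v _ => by
            rw [key v γ hγ]
      _ = ∑ γ ∈ Fn A dV, X (π ∪ A.image fun b => (γ b, h b)) := by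
          refine Finset.sum_congr rfl fun γ hγ => ?_
          refine hX.1 _ ?_ (h a)
          have h1 : (π ∪ A.image fun b => (γ b, h b)).card ≤ π.card + A.card :=
            le_trans (Finset.card_union_le _ _)
              (by exact Nat.add_le_add_left (Finset.card_image_le) _)
          omega
      _ = X π := ih π (by omega)

variable {p r : ℕ}

def UU (bag : Fin r → Finset (Fin p)) (i : ℕ) : Finset (Fin p) :=
  (Finset.univ.filter fun j : Fin r => (j : ℕ) < i).biUnion bag

lemma mem_UU {bag : Fin r → Finset (Fin p)} {i : ℕ} {a : Fin p} :
    a ∈ UU bag i ↔ ∃ j : Fin r, (j : ℕ) < i ∧ a ∈ bag j := by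
  simp [UU]

lemma UU_zero (bag : Fin r → Finset (Fin p)) : UU bag 0 = ∅ := by
  ext a; simp [mem_UU]

lemma UU_succ (bag : Fin r → Finset (Fin p)) {i : ℕ} (hi : i < r) :
    UU bag (i + 1) = UU bag i ∪ bag ⟨i, hi⟩ := by
  ext a
  simp only [mem_UU, Finset.mem_union]
  constructor
  · rintro ⟨j, hj, hja⟩
    rcases Nat.lt_succ_iff_lt_or_eq.1 hj with h | h
    · exact Or.inl ⟨j, h, hja⟩
    · exact Or.inr (by convert hja using 2; exact Fin.ext h.symm)
  · rintro (⟨j, hj, hja⟩ | h)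
    · exact ⟨j, Nat.lt_succ_of_lt hj, hja⟩
    · exact ⟨⟨i, hi⟩, Nat.lt_succ_self i, h⟩

lemma bag_subset_UU {bag : Fin r → Finset (Fin p)} {i : ℕ} {j : Fin r} (hj : (j : ℕ) < i) :
    bag j ⊆ UU bag i := fun a ha => mem_UU.2 ⟨j, hj, ha⟩

def bagCond {V : Type*} (F : SimpleGraph (Fin p)) (G : SimpleGraph V)
    (B : Finset (Fin p)) (g : Fin p → V) : Prop :=
  Set.InjOn g ↑B ∧ ∀ a ∈ B, ∀ b ∈ B, (F.Adj a b ↔ G.Adj (g a) (g b))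

lemma bagCond_congr {V : Type*} {F : SimpleGraph (Fin p)} {G : SimpleGraph V}
    {B : Finset (Fin p)} {u u' : Fin p → V} (h : ∀ a ∈ B, u a = u' a) :
    bagCond F G B u ↔ bagCond F G B u' := by
  unfold bagCond
  constructor
  · rintro ⟨h1, h2⟩
    refine ⟨fun a ha b hb hab => h1 ha hb ?_, fun a ha b hb => ?_⟩
    · rw [h a ha, h b hb]; exact hab
    · rw [← h a ha, ← h b hb]; exact h2 a ha b hb
  · rintro ⟨h1, h2⟩
    refine ⟨fun a ha b hb hab => h1 ha hb ?_, fun a ha b hb => ?_⟩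
    · rw [← h a ha, ← h b hb]; exact hab
    · rw [h a ha, h b hb]; exact h2 a ha b hb

def goodF {V : Type*} (F : SimpleGraph (Fin p)) (G : SimpleGraph V)
    (bag : Fin r → Finset (Fin p)) (i : ℕ) (d : V) (g : Fin p → V) : Prop :=
  (∀ a ∉ UU bag i, g a = d) ∧ ∀ j : Fin r, (j : ℕ) < i → bagCond F G (bag j) g

def pmapF {V W : Type*} [DecidableEq V] [DecidableEq W]
    (B : Finset (Fin p)) (g : Fin p → V) (h : Fin p → W) : Finset (V × W) :=
  B.image fun a => (g a, h a)

lemma pmapF_congr {V W : Type*} [DecidableEq V] [DecidableEq W]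
    {B : Finset (Fin p)} {g g' : Fin p → V} {h h' : Fin p → W}
    (hg : ∀ a ∈ B, g a = g' a) (hh : ∀ a ∈ B, h a = h' a) :
    pmapF B g h = pmapF B g' h' :=
  Finset.image_congr fun a ha => by rw [hg a ha, hh a ha]

lemma pmapF_card_le {V W : Type*} [DecidableEq V] [DecidableEq W]
    (B : Finset (Fin p)) (g : Fin p → V) (h : Fin p → W) :
    (pmapF B g h).card ≤ B.card := Finset.card_image_le

/-- when the bag pairing is a partial isomorphism, the bag conditions transfer -/
lemma bagCond_transfer {F : SimpleGraph (Fin p)} {B : Finset (Fin p)}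
    {u : Fin p → V} {h : Fin p → W}
    (hiso : IsPartialIso G H (pmapF B u h)) :
    bagCond F G B u ↔ bagCond F H B h := by
  have key : ∀ a ∈ B, ∀ b ∈ B,
      (u a = u b ↔ h a = h b) ∧ (G.Adj (u a) (u b) ↔ H.Adj (h a) (h b)) := by
    intro a ha b hb
    exact hiso (u a, h a) (Finset.mem_image_of_mem _ ha)
      (u b, h b) (Finset.mem_image_of_mem _ hb)
  unfold bagCond
  constructor
  · rintro ⟨h1, h2⟩
    refine ⟨fun a ha b hb hab => h1 ha hb ((key a ha b hb).1.2 hab), fun a ha b hb => ?_⟩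
    exact (h2 a ha b hb).trans (key a ha b hb).2
  · rintro ⟨h1, h2⟩
    refine ⟨fun a ha b hb hab => h1 ha hb ((key a ha b hb).1.1 hab), fun a ha b hb => ?_⟩
    exact (h2 a ha b hb).trans (key a ha b hb).2.symm

lemma indSwap (hX : IsLisoSolution (k + 1) G H X) {F : SimpleGraph (Fin p)}
    {B : Finset (Fin p)} (hB : B.card ≤ k + 1) (u : Fin p → V) (h : Fin p → W) :
    (if bagCond F G B u then X (pmapF B u h) else 0)
      = (if bagCond F H B h then X (pmapF B u h) else 0) := by
  by_cases hiso : IsPartialIso G H (pmapF B u h)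
  · rw [if_congr (bagCond_transfer hiso) rfl rfl]
  · have h0 : X (pmapF B u h) = 0 :=
      hX.2.2.1 _ (le_trans (pmapF_card_le B u h) hB) hiso
    rw [h0]; simp

def comb {β : Type*} (Nw : Finset (Fin p)) (g ν : Fin p → β) : Fin p → β :=
  fun a => if a ∈ Nw then ν a else g a

def trunc {β : Type*} (U : Finset (Fin p)) (d : β) (g : Fin p → β) : Fin p → β :=
  fun a => if a ∈ U then g a else d

lemma sum_card_agree {β : Type*} [Fintype β] [DecidableEq β]
    (P : (Fin p → β) → Prop) (B C : Finset (Fin p)) (hC : C ⊆ B) (d : β) (h : Fin p → β) :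
    (∑ μ ∈ Fn (B \ C) d,
      ((Finset.univ.filter fun h' : Fin p → β =>
        P h' ∧ ∀ a ∈ B, h' a = comb (B \ C) h μ a).card : ℝ))
      = ((Finset.univ.filter fun h' : Fin p → β =>
          P h' ∧ ∀ a ∈ C, h' a = h a).card : ℝ) := by
  rw [← Nat.cast_sum]
  congr 1
  rw [← Finset.card_biUnion]
  · congr 1
    ext h'
    simp only [Finset.mem_biUnion, Finset.mem_filter, Finset.mem_univ, true_and]
    constructor
    · rintro ⟨μ, hμ, hP, hagree⟩
      refine ⟨hP, fun a ha => ?_⟩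
      have := hagree a (hC ha)
      simp only [comb] at this
      rwa [if_neg (fun hmem => (Finset.mem_sdiff.1 hmem).2 ha)] at this
    · rintro ⟨hP, hagree⟩
      refine ⟨fun a => if a ∈ B \ C then h' a else d, mem_Fn.2 fun a ha => if_neg ha,
        hP, fun a ha => ?_⟩
      by_cases hmem : a ∈ B \ C
      · simp [comb, hmem]
      · simp only [comb]
        rw [if_neg hmem]
        have haC : a ∈ C := by
          by_contra haC
          exact hmem (Finset.mem_sdiff.2 ⟨ha, haC⟩)
        exact hagree a haC
  · intro μ1 h1 μ2 h2 hne
    simp only [Function.onFun]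
    rw [Finset.disjoint_left]
    intro h' hh1 hh2
    apply hne
    rw [Finset.mem_filter] at hh1 hh2
    funext a
    by_cases ha : a ∈ B \ C
    · have e1 := hh1.2.2 a (Finset.mem_sdiff.1 ha).1
      have e2 := hh2.2.2 a (Finset.mem_sdiff.1 ha).1
      simp only [comb] at e1 e2
      rw [if_pos ha] at e1 e2
      rw [← e1, ← e2]
    · rw [mem_Fn.1 h1 a ha, mem_Fn.1 h2 a ha]

lemma stepA {β : Type*} [Fintype β] (F : SimpleGraph (Fin p)) (G : SimpleGraph β)
    (bag : Fin r → Finset (Fin p)) {i : ℕ} (hi : i < r) (d : β)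
    (φ : (Fin p → β) → ℝ) :
    ∑ g ∈ Finset.univ.filter (goodF F G bag (i + 1) d), φ g
      = ∑ g' ∈ Finset.univ.filter (goodF F G bag i d),
          ∑ ν ∈ Fn (bag ⟨i, hi⟩ \ UU bag i) d,
            (if bagCond F G (bag ⟨i, hi⟩) (comb (bag ⟨i, hi⟩ \ UU bag i) g' ν)
             then φ (comb (bag ⟨i, hi⟩ \ UU bag i) g' ν) else 0) := by
  set B := bag ⟨i, hi⟩ with hB
  set U := UU bag i with hU
  set Nw := B \ U with hNw
  have hNwU : ∀ a, a ∈ Nw → a ∉ U := fun a ha => (Finset.mem_sdiff.1 ha).2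
  have hNwB : Nw ⊆ B := Finset.sdiff_subset
  rw [← Finset.sum_product' (s := Finset.univ.filter (goodF F G bag i d))
    (t := Fn Nw d) (f := fun g' ν =>
      if bagCond F G B (comb Nw g' ν) then φ (comb Nw g' ν) else 0)]
  rw [← Finset.sum_filter (p := fun q : (Fin p → β) × (Fin p → β) =>
      bagCond F G B (comb Nw q.1 q.2))
    (f := fun q => φ (comb Nw q.1 q.2))]
  refine Finset.sum_bij' (fun g _ => ((trunc U d g, trunc Nw d g) : (Fin p → β) × (Fin p → β)))
    (fun q _ => comb Nw q.1 q.2) ?_ ?_ ?_ ?_ ?_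
  · -- forward membership
    intro g hg
    have hg' := (Finset.mem_filter.1 hg).2
    have hcombg : ∀ a ∈ B, comb Nw (trunc U d g) (trunc Nw d g) a = g a := by
      intro a ha
      by_cases haNw : a ∈ Nw
      · simp [comb, trunc, haNw]
      · have haU : a ∈ U := by
          by_contra haU
          exact haNw (Finset.mem_sdiff.2 ⟨ha, haU⟩)
        simp [comb, trunc, haNw, haU]
    rw [Finset.mem_filter, Finset.mem_product]
    refine ⟨⟨Finset.mem_filter.2 ⟨Finset.mem_univ _, ?_, ?_⟩, ?_⟩, ?_⟩
    · intro a ha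
      simp [trunc, hU, ha]
    · intro j0 hj0
      refine (bagCond_congr (fun a ha => ?_)).2 (hg'.2 j0 (Nat.lt_succ_of_lt hj0))
      have : a ∈ U := bag_subset_UU hj0 ha
      simp [trunc, this]
    · refine mem_Fn.2 fun a ha => by simp [trunc, ha]
    · exact (bagCond_congr hcombg).2 (hg'.2 ⟨i, hi⟩ (Nat.lt_succ_self i))
  · -- backward membership
    intro q hq
    rw [Finset.mem_filter, Finset.mem_product, Finset.mem_filter] at hq
    obtain ⟨⟨⟨_, hq1⟩, hq2⟩, hqc⟩ := hq
    rw [Finset.mem_filter]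
    refine ⟨Finset.mem_univ _, ?_, ?_⟩
    · intro a ha
      rw [UU_succ bag hi, Finset.mem_union] at ha
      push_neg at ha
      have haNw : a ∉ Nw := fun hmem => ha.2 (hNwB hmem)
      simp only [comb, if_neg haNw]
      exact hq1.1 a ha.1
    · intro j0 hj0
      rcases Nat.lt_succ_iff_lt_or_eq.1 hj0 with h | h
      · refine (bagCond_congr (fun a ha => ?_)).1 (hq1.2 j0 h)
        have haU : a ∈ U := bag_subset_UU h ha
        have haNw : a ∉ Nw := fun hmem => hNwU a hmem haU
        simp [comb, haNw]
      · have : j0 = ⟨i, hi⟩ := Fin.ext h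
        rw [this]
        exact hqc
  · -- left inverse
    intro g hg
    dsimp only
    rw [Finset.mem_filter] at hg
    funext a
    by_cases haNw : a ∈ Nw
    · simp [comb, trunc, haNw]
    · by_cases haU : a ∈ U
      · simp [comb, trunc, haNw, haU]
      · have haB : a ∉ B := fun hmem => haNw (Finset.mem_sdiff.2 ⟨hmem, haU⟩)
        have : a ∉ UU bag (i + 1) := by
          rw [UU_succ bag hi, Finset.mem_union]
          push_neg
          exact ⟨haU, haB⟩
        simp only [comb, trunc, if_neg haNw, if_neg haU]
        exact (hg.2.1 a this).symm
  · -- right inverse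
    intro q hq
    rw [Finset.mem_filter, Finset.mem_product, Finset.mem_filter] at hq
    obtain ⟨⟨⟨_, hq1⟩, hq2⟩, _⟩ := hq
    refine Prod.ext ?_ ?_
    · show trunc U d (comb Nw q.1 q.2) = q.1
      funext a
      by_cases haU : a ∈ U
      · have haNw : a ∉ Nw := fun hmem => hNwU a hmem haU
        simp [trunc, comb, haU, haNw]
      · simp only [trunc, if_neg haU]
        exact (hq1.1 a haU).symm
    · show trunc Nw d (comb Nw q.1 q.2) = q.2
      funext a
      by_cases haNw : a ∈ Nw
      · simp [trunc, comb, haNw]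
      · simp only [trunc, if_neg haNw]
        exact (mem_Fn.1 hq2 a haNw).symm
  · -- value equality
    intro g hg
    dsimp only
    rw [Finset.mem_filter] at hg
    congr 1
    funext a
    by_cases haNw : a ∈ Nw
    · simp [comb, trunc, haNw]
    · by_cases haU : a ∈ U
      · simp [comb, trunc, haNw, haU]
      · have haB : a ∉ B := fun hmem => haNw (Finset.mem_sdiff.2 ⟨hmem, haU⟩)
        have : a ∉ UU bag (i + 1) := by
          rw [UU_succ bag hi, Finset.mem_union]
          push_neg
          exact ⟨haU, haB⟩
        simp only [comb, trunc, if_neg haNw, if_neg haU]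
        exact hg.2.1 a this

lemma succStep {F : SimpleGraph (Fin p)} {bag : Fin r → Finset (Fin p)}
    (hwidth : ∀ j, (bag j).card ≤ k + 1)
    (hX : IsLisoSolution (k + 1) G H X) (dV : V) (dW : W)
    {i : ℕ} (hi : i < r) (B' : Finset (Fin p))
    (hB'card : B'.card ≤ k + 1) (hB'U : B' ⊆ UU bag i)
    (hCB' : bag ⟨i, hi⟩ ∩ UU bag i ⊆ B')
    (IH : ∀ h : Fin p → W,
      ∑ g ∈ Finset.univ.filter (goodF F G bag i dV), X (pmapF B' g h) =
        ((Finset.univ.filter fun h' =>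
          goodF F H bag i dW h' ∧ ∀ a ∈ B', h' a = h a).card : ℝ))
    (h : Fin p → W) :
    ∑ g ∈ Finset.univ.filter (goodF F G bag (i + 1) dV), X (pmapF (bag ⟨i, hi⟩) g h) =
      ((Finset.univ.filter fun h' =>
        goodF F H bag (i + 1) dW h' ∧ ∀ a ∈ bag ⟨i, hi⟩, h' a = h a).card : ℝ) := by
  have hBcard : (bag ⟨i, hi⟩).card ≤ k + 1 := hwidth _
  -- notation (no `set` to keep terms syntactic)
  have hC_union : (bag ⟨i, hi⟩ ∩ UU bag i) ∪ (bag ⟨i, hi⟩ \ UU bag i) = bag ⟨i, hi⟩ := by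
    rw [Finset.union_comm, Finset.sdiff_union_inter]
  have hC_card : (bag ⟨i, hi⟩ ∩ UU bag i).card + (bag ⟨i, hi⟩ \ UU bag i).card
      = (bag ⟨i, hi⟩).card := Finset.card_inter_add_card_sdiff _ _
  have hCD_card : (B' \ (bag ⟨i, hi⟩ ∩ UU bag i)).card + (bag ⟨i, hi⟩ ∩ UU bag i).card
      = B'.card := Finset.card_sdiff_add_card_eq_card hCB'
  -- Step 1: decompose along the new bag (G side)
  rw [stepA F G bag hi dV (fun g => X (pmapF (bag ⟨i, hi⟩) g h))]
  -- Step 2: swap indicator to the H side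
  have swap2 : ∀ g' : Fin p → V, ∀ ν : Fin p → V,
      (if bagCond F G (bag ⟨i, hi⟩) (comb (bag ⟨i, hi⟩ \ UU bag i) g' ν)
        then X (pmapF (bag ⟨i, hi⟩) (comb (bag ⟨i, hi⟩ \ UU bag i) g' ν) h) else 0)
        = (if bagCond F H (bag ⟨i, hi⟩) h
            then X (pmapF (bag ⟨i, hi⟩) (comb (bag ⟨i, hi⟩ \ UU bag i) g' ν) h) else 0) :=
    fun g' ν => indSwap hX hBcard _ h
  rw [Finset.sum_congr rfl fun g' _ => Finset.sum_congr rfl fun ν _ => swap2 g' ν]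
  -- Step 4 preparation: collapsing the inner sum over new vertices
  have inner : ∀ g' : Fin p → V,
      ∑ ν ∈ Fn (bag ⟨i, hi⟩ \ UU bag i) dV,
        X (pmapF (bag ⟨i, hi⟩) (comb (bag ⟨i, hi⟩ \ UU bag i) g' ν) h)
      = X (pmapF (bag ⟨i, hi⟩ ∩ UU bag i) g' h) := by
    intro g'
    have himg : ∀ ν : Fin p → V,
        pmapF (bag ⟨i, hi⟩) (comb (bag ⟨i, hi⟩ \ UU bag i) g' ν) h
          = pmapF (bag ⟨i, hi⟩ ∩ UU bag i) g' h
            ∪ (bag ⟨i, hi⟩ \ UU bag i).image fun a => (ν a, h a) := by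
      intro ν
      have h1 : pmapF (bag ⟨i, hi⟩) (comb (bag ⟨i, hi⟩ \ UU bag i) g' ν) h
          = pmapF (bag ⟨i, hi⟩ ∩ UU bag i) (comb (bag ⟨i, hi⟩ \ UU bag i) g' ν) h
            ∪ pmapF (bag ⟨i, hi⟩ \ UU bag i) (comb (bag ⟨i, hi⟩ \ UU bag i) g' ν) h := by
        unfold pmapF
        rw [← Finset.image_union, hC_union]
      rw [h1]
      congr 1
      · refine Finset.image_congr fun a ha => ?_
        have ha' : a ∈ bag ⟨i, hi⟩ ∩ UU bag i := ha
        have haNw : a ∉ bag ⟨i, hi⟩ \ UU bag i :=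
          fun hmem => (Finset.mem_sdiff.1 hmem).2 (Finset.mem_inter.1 ha').2
        show (comb (bag ⟨i, hi⟩ \ UU bag i) g' ν a, h a) = (g' a, h a)
        simp only [comb]
        rw [if_neg haNw]
      · refine Finset.image_congr fun a ha => ?_
        have ha' : a ∈ bag ⟨i, hi⟩ \ UU bag i := ha
        show (comb (bag ⟨i, hi⟩ \ UU bag i) g' ν a, h a) = (ν a, h a)
        simp only [comb]
        rw [if_pos ha']
    rw [Finset.sum_congr rfl fun ν _ => by rw [himg ν]]
    refine sumOutV hX dV h _ _ ?_
    have h1 : (pmapF (bag ⟨i, hi⟩ ∩ UU bag i) g' h).card ≤ (bag ⟨i, hi⟩ ∩ UU bag i).card :=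
      pmapF_card_le _ _ _
    omega
  -- Step 5-7: rewriting the remaining sum using the induction hypothesis
  have main57 :
      ∑ g' ∈ Finset.univ.filter (goodF F G bag i dV),
        X (pmapF (bag ⟨i, hi⟩ ∩ UU bag i) g' h)
      = ((Finset.univ.filter fun h' =>
          goodF F H bag i dW h' ∧ ∀ a ∈ bag ⟨i, hi⟩ ∩ UU bag i, h' a = h a).card : ℝ) := by
    have step5 : ∀ g' : Fin p → V,
        X (pmapF (bag ⟨i, hi⟩ ∩ UU bag i) g' h)
        = ∑ μ ∈ Fn (B' \ (bag ⟨i, hi⟩ ∩ UU bag i)) dW,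
            X (pmapF B' g' (comb (B' \ (bag ⟨i, hi⟩ ∩ UU bag i)) h μ)) := by
      intro g'
      have himg : ∀ μ : Fin p → W,
          pmapF (bag ⟨i, hi⟩ ∩ UU bag i) g' h
            ∪ (B' \ (bag ⟨i, hi⟩ ∩ UU bag i)).image (fun a => (g' a, μ a))
          = pmapF B' g' (comb (B' \ (bag ⟨i, hi⟩ ∩ UU bag i)) h μ) := by
        intro μ
        have h1 : pmapF B' g' (comb (B' \ (bag ⟨i, hi⟩ ∩ UU bag i)) h μ)
            = pmapF (bag ⟨i, hi⟩ ∩ UU bag i) g'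
                (comb (B' \ (bag ⟨i, hi⟩ ∩ UU bag i)) h μ)
              ∪ pmapF (B' \ (bag ⟨i, hi⟩ ∩ UU bag i)) g'
                (comb (B' \ (bag ⟨i, hi⟩ ∩ UU bag i)) h μ) := by
          unfold pmapF
          rw [← Finset.image_union, Finset.union_sdiff_of_subset hCB']
        rw [h1]
        congr 1
        · refine (Finset.image_congr fun a ha => ?_).symm
          have ha' : a ∈ bag ⟨i, hi⟩ ∩ UU bag i := ha
          have haD : a ∉ B' \ (bag ⟨i, hi⟩ ∩ UU bag i) :=
            fun hmem => (Finset.mem_sdiff.1 hmem).2 ha'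
          show (g' a, comb (B' \ (bag ⟨i, hi⟩ ∩ UU bag i)) h μ a) = (g' a, h a)
          simp only [comb]
          rw [if_neg haD]
        · refine (Finset.image_congr fun a ha => ?_).symm
          have ha' : a ∈ B' \ (bag ⟨i, hi⟩ ∩ UU bag i) := ha
          show (g' a, comb (B' \ (bag ⟨i, hi⟩ ∩ UU bag i)) h μ a) = (g' a, μ a)
          simp only [comb]
          rw [if_pos ha']
      have h2 : (pmapF (bag ⟨i, hi⟩ ∩ UU bag i) g' h).card
          + (B' \ (bag ⟨i, hi⟩ ∩ UU bag i)).card ≤ k + 1 := by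
        have h1 : (pmapF (bag ⟨i, hi⟩ ∩ UU bag i) g' h).card
            ≤ (bag ⟨i, hi⟩ ∩ UU bag i).card := pmapF_card_le _ _ _
        omega
      calc X (pmapF (bag ⟨i, hi⟩ ∩ UU bag i) g' h)
          = ∑ μ ∈ Fn (B' \ (bag ⟨i, hi⟩ ∩ UU bag i)) dW,
              X (pmapF (bag ⟨i, hi⟩ ∩ UU bag i) g' h
                ∪ (B' \ (bag ⟨i, hi⟩ ∩ UU bag i)).image fun a => (g' a, μ a)) :=
            (sumOutW hX dW g' _ _ h2).symm
        _ = ∑ μ ∈ Fn (B' \ (bag ⟨i, hi⟩ ∩ UU bag i)) dW,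
              X (pmapF B' g' (comb (B' \ (bag ⟨i, hi⟩ ∩ UU bag i)) h μ)) :=
            Finset.sum_congr rfl fun μ _ => by rw [himg μ]
    rw [Finset.sum_congr rfl fun g' _ => step5 g']
    rw [Finset.sum_comm]
    rw [Finset.sum_congr rfl fun μ _ => IH (comb (B' \ (bag ⟨i, hi⟩ ∩ UU bag i)) h μ)]
    exact sum_card_agree (goodF F H bag i dW) B' (bag ⟨i, hi⟩ ∩ UU bag i) hCB' dW h
  -- Step 3: pull the indicator out, apply inner and main57
  have lhs_eq :
      ∑ g' ∈ Finset.univ.filter (goodF F G bag i dV),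
        ∑ ν ∈ Fn (bag ⟨i, hi⟩ \ UU bag i) dV,
          (if bagCond F H (bag ⟨i, hi⟩) h
            then X (pmapF (bag ⟨i, hi⟩) (comb (bag ⟨i, hi⟩ \ UU bag i) g' ν) h) else 0)
      = (if bagCond F H (bag ⟨i, hi⟩) h
          then ((Finset.univ.filter fun h' =>
            goodF F H bag i dW h' ∧ ∀ a ∈ bag ⟨i, hi⟩ ∩ UU bag i, h' a = h a).card : ℝ)
          else 0) := by
    by_cases hc : bagCond F H (bag ⟨i, hi⟩) h
    · simp only [if_pos hc]
      rw [Finset.sum_congr rfl fun g' _ => inner g']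
      exact main57
    · simp only [if_neg hc]
      simp
  rw [lhs_eq]
  -- Step 8: compute the H-side count
  have rhs_eq :
      ((Finset.univ.filter fun h' =>
        goodF F H bag (i + 1) dW h' ∧ ∀ a ∈ bag ⟨i, hi⟩, h' a = h a).card : ℝ)
      = (if bagCond F H (bag ⟨i, hi⟩) h
          then ((Finset.univ.filter fun h' =>
            goodF F H bag i dW h' ∧ ∀ a ∈ bag ⟨i, hi⟩ ∩ UU bag i, h' a = h a).card : ℝ)
          else 0) := by
    have hμ0 : trunc (bag ⟨i, hi⟩ \ UU bag i) dW h ∈ Fn (bag ⟨i, hi⟩ \ UU bag i) dW :=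
      mem_Fn.2 fun a ha => by simp [trunc, ha]
    have hcard1 : ((Finset.univ.filter fun h' =>
          goodF F H bag (i + 1) dW h' ∧ ∀ a ∈ bag ⟨i, hi⟩, h' a = h a).card : ℝ)
        = ∑ h'' ∈ Finset.univ.filter (goodF F H bag (i + 1) dW),
            (if ∀ a ∈ bag ⟨i, hi⟩, h'' a = h a then (1 : ℝ) else 0) := by
      rw [Finset.sum_boole, Finset.filter_filter]
    rw [hcard1]
    rw [stepA F H bag hi dW
      (fun h'' => if ∀ a ∈ bag ⟨i, hi⟩, h'' a = h a then (1 : ℝ) else 0)]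
    have key : ∀ h' : Fin p → W, ∀ μ ∈ Fn (bag ⟨i, hi⟩ \ UU bag i) dW,
        ((bagCond F H (bag ⟨i, hi⟩) (comb (bag ⟨i, hi⟩ \ UU bag i) h' μ)
            ∧ ∀ a ∈ bag ⟨i, hi⟩, comb (bag ⟨i, hi⟩ \ UU bag i) h' μ a = h a)
          ↔ ((bagCond F H (bag ⟨i, hi⟩) h ∧ ∀ a ∈ bag ⟨i, hi⟩ ∩ UU bag i, h' a = h a)
              ∧ μ = trunc (bag ⟨i, hi⟩ \ UU bag i) dW h)) := by
      intro h' μ hμ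
      constructor
      · rintro ⟨hbc, hagree⟩
        refine ⟨⟨(bagCond_congr hagree).1 hbc, fun a ha => ?_⟩, ?_⟩
        · have haB : a ∈ bag ⟨i, hi⟩ := (Finset.mem_inter.1 ha).1
          have haNw : a ∉ bag ⟨i, hi⟩ \ UU bag i :=
            fun hmem => (Finset.mem_sdiff.1 hmem).2 (Finset.mem_inter.1 ha).2
          have := hagree a haB
          simpa only [comb, if_neg haNw] using this
        · funext a
          by_cases haNw : a ∈ bag ⟨i, hi⟩ \ UU bag i
          · have haB : a ∈ bag ⟨i, hi⟩ := (Finset.mem_sdiff.1 haNw).1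
            have := hagree a haB
            simp only [comb, if_pos haNw] at this
            simp only [trunc, if_pos haNw]
            exact this
          · simp only [trunc, if_neg haNw]
            exact mem_Fn.1 hμ a haNw
      · rintro ⟨⟨hbch, hC⟩, rfl⟩
        have hagree : ∀ a ∈ bag ⟨i, hi⟩,
            comb (bag ⟨i, hi⟩ \ UU bag i) h' (trunc (bag ⟨i, hi⟩ \ UU bag i) dW h) a
              = h a := by
          intro a ha
          by_cases haNw : a ∈ bag ⟨i, hi⟩ \ UU bag i
          · simp only [comb, if_pos haNw, trunc, if_pos haNw]
          · have haU : a ∈ UU bag i := by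
              by_contra haU
              exact haNw (Finset.mem_sdiff.2 ⟨ha, haU⟩)
            simp only [comb, if_neg haNw]
            exact hC a (Finset.mem_inter.2 ⟨ha, haU⟩)
        exact ⟨(bagCond_congr hagree).2 hbch, hagree⟩
    have term_eq : ∀ h' : Fin p → W, ∀ μ ∈ Fn (bag ⟨i, hi⟩ \ UU bag i) dW,
        (if bagCond F H (bag ⟨i, hi⟩) (comb (bag ⟨i, hi⟩ \ UU bag i) h' μ)
          then (if ∀ a ∈ bag ⟨i, hi⟩, comb (bag ⟨i, hi⟩ \ UU bag i) h' μ a = h a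
            then (1 : ℝ) else 0) else 0)
        = (if ((bagCond F H (bag ⟨i, hi⟩) h ∧ ∀ a ∈ bag ⟨i, hi⟩ ∩ UU bag i, h' a = h a)
              ∧ μ = trunc (bag ⟨i, hi⟩ \ UU bag i) dW h) then (1 : ℝ) else 0) := by
      intro h' μ hμ
      rw [← ite_and, if_congr (key h' μ hμ) rfl rfl]
    have inner_eq : ∀ h' : Fin p → W,
        ∑ μ ∈ Fn (bag ⟨i, hi⟩ \ UU bag i) dW,
          (if ((bagCond F H (bag ⟨i, hi⟩) h ∧ ∀ a ∈ bag ⟨i, hi⟩ ∩ UU bag i, h' a = h a)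
              ∧ μ = trunc (bag ⟨i, hi⟩ \ UU bag i) dW h) then (1 : ℝ) else 0)
        = (if (bagCond F H (bag ⟨i, hi⟩) h ∧ ∀ a ∈ bag ⟨i, hi⟩ ∩ UU bag i, h' a = h a)
            then (1 : ℝ) else 0) := by
      intro h'
      by_cases hP : bagCond F H (bag ⟨i, hi⟩) h ∧ ∀ a ∈ bag ⟨i, hi⟩ ∩ UU bag i, h' a = h a
      · rw [if_pos hP]
        rw [Finset.sum_congr rfl fun μ _ => if_congr (and_iff_right hP) rfl rfl]
        rw [Finset.sum_ite_eq' (Fn (bag ⟨i, hi⟩ \ UU bag i) dW)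
          (trunc (bag ⟨i, hi⟩ \ UU bag i) dW h) (fun _ => (1 : ℝ))]
        exact if_pos hμ0
      · rw [if_neg hP]
        exact Finset.sum_eq_zero fun μ _ => if_neg fun hcon => hP hcon.1
    calc ∑ h' ∈ Finset.univ.filter (goodF F H bag i dW),
          ∑ μ ∈ Fn (bag ⟨i, hi⟩ \ UU bag i) dW,
            (if bagCond F H (bag ⟨i, hi⟩) (comb (bag ⟨i, hi⟩ \ UU bag i) h' μ)
              then (if ∀ a ∈ bag ⟨i, hi⟩, comb (bag ⟨i, hi⟩ \ UU bag i) h' μ a = h a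
                then (1 : ℝ) else 0) else 0)
        = ∑ h' ∈ Finset.univ.filter (goodF F H bag i dW),
            (if (bagCond F H (bag ⟨i, hi⟩) h ∧ ∀ a ∈ bag ⟨i, hi⟩ ∩ UU bag i, h' a = h a)
              then (1 : ℝ) else 0) := by
          refine Finset.sum_congr rfl fun h' _ => ?_
          rw [Finset.sum_congr rfl fun μ hμ => term_eq h' μ hμ]
          exact inner_eq h'
      _ = (if bagCond F H (bag ⟨i, hi⟩) h
            then ((Finset.univ.filter fun h' =>
              goodF F H bag i dW h' ∧ ∀ a ∈ bag ⟨i, hi⟩ ∩ UU bag i, h' a = h a).card : ℝ)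
            else 0) := by
          by_cases hc : bagCond F H (bag ⟨i, hi⟩) h
          · simp only [hc, true_and, if_pos]
            rw [Finset.sum_boole, Finset.filter_filter]
          · simp [hc]
  rw [rhs_eq]

lemma invariant {F : SimpleGraph (Fin p)} {bag : Fin r → Finset (Fin p)}
    (hdec : IsPathDecomp F bag) (hwidth : ∀ j, (bag j).card ≤ k + 1)
    (hX : IsLisoSolution (k + 1) G H X) (dV : V) (dW : W) :
    ∀ i, i ≤ r → ∀ Bn : Finset (Fin p),
      ((i = 0 ∧ Bn = ∅) ∨ ∃ j : Fin r, (j : ℕ) + 1 = i ∧ Bn = bag j) →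
      ∀ h : Fin p → W,
        ∑ g ∈ Finset.univ.filter (goodF F G bag i dV), X (pmapF Bn g h) =
          ((Finset.univ.filter fun h' =>
            goodF F H bag i dW h' ∧ ∀ a ∈ Bn, h' a = h a).card : ℝ) := by
  intro i
  induction i with
  | zero =>
    intro _ Bn hBn h
    obtain rfl : Bn = ∅ := by
      rcases hBn with ⟨_, h0⟩ | ⟨j, hj, _⟩
      · exact h0
      · exact absurd hj (by omega)
    have hGf : Finset.univ.filter (goodF F G bag 0 dV) = {fun _ => dV} := by
      ext g
      simp only [Finset.mem_filter, Finset.mem_univ, true_and, Finset.mem_singleton]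
      constructor
      · rintro ⟨h1, _⟩
        funext a
        exact h1 a (by rw [UU_zero]; exact Finset.notMem_empty a)
      · rintro rfl
        exact ⟨fun _ _ => rfl, fun j hj => absurd hj (Nat.not_lt_zero _)⟩
    have hHf : Finset.univ.filter (fun h' =>
        goodF F H bag 0 dW h' ∧ ∀ a ∈ (∅ : Finset (Fin p)), h' a = h a)
          = {fun _ => dW} := by
      ext g
      simp only [Finset.mem_filter, Finset.mem_univ, true_and, Finset.mem_singleton,
        Finset.notMem_empty, false_implies, implies_true, and_true]
      constructor
      · rintro ⟨h1, _⟩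
        funext a
        exact h1 a (by rw [UU_zero]; exact Finset.notMem_empty a)
      · rintro rfl
        exact ⟨fun _ _ => rfl, fun j hj => absurd hj (Nat.not_lt_zero _)⟩
    rw [hGf, hHf]
    simp [pmapF, hX.2.2.2]
  | succ i ih =>
    intro hi1 Bn hBn h
    have hi : i < r := hi1
    obtain ⟨j, hj1, rfl⟩ : ∃ j : Fin r, (j : ℕ) + 1 = i + 1 ∧ Bn = bag j := by
      rcases hBn with ⟨h0, _⟩ | hj
      · exact absurd h0 (by omega)
      · exact hj
    have hjfin : j = ⟨i, hi⟩ := Fin.ext (show (j : ℕ) = i by omega)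
    subst hjfin
    obtain ⟨B', hB'⟩ : ∃ B' : Finset (Fin p),
        ((i = 0 ∧ B' = ∅) ∨ ∃ j0 : Fin r, (j0 : ℕ) + 1 = i ∧ B' = bag j0) := by
      cases i with
      | zero => exact ⟨∅, Or.inl ⟨rfl, rfl⟩⟩
      | succ m => exact ⟨bag ⟨m, by omega⟩, Or.inr ⟨⟨m, by omega⟩, rfl, rfl⟩⟩
    have hB'card : B'.card ≤ k + 1 := by
      rcases hB' with ⟨_, rfl⟩ | ⟨j0, _, rfl⟩
      · simp
      · exact hwidth j0
    have hB'U : B' ⊆ UU bag i := by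
      rcases hB' with ⟨_, rfl⟩ | ⟨j0, hj0, rfl⟩
      · exact Finset.empty_subset _
      · exact bag_subset_UU (by omega)
    have hCB' : bag ⟨i, hi⟩ ∩ UU bag i ⊆ B' := by
      intro a ha
      rw [Finset.mem_inter] at ha
      obtain ⟨l, hl, hla⟩ := mem_UU.1 ha.2
      rcases hB' with ⟨h0, _⟩ | ⟨j0, hj0, rfl⟩
      · exact absurd hl (by omega)
      · have h1 : (l : ℕ) ≤ (j0 : ℕ) := by omega
        have h2 : (j0 : ℕ) ≤ i := by omega
        exact hdec.2.2 a l j0 ⟨i, hi⟩ h1 h2 hla ha.1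
    exact succStep hwidth hX dV dW hi B' hB'card hB'U hCB' (ih (by omega) B' hB') h

lemma bisoCount_of_isEmpty {α β : Type*} [IsEmpty α] (F : SimpleGraph α) {r : ℕ}
    (bag : Fin r → Finset α) (G : SimpleGraph β) : bisoCount F bag G = 1 := by
  have hall : ∀ f : α → β, (∀ a b, F.Adj a b → G.Adj (f a) (f b)) ∧
      ∀ i : Fin r, Set.InjOn f (bag i) ∧
        ∀ a ∈ bag i, ∀ b ∈ bag i, (F.Adj a b ↔ G.Adj (f a) (f b)) :=
    fun f => ⟨fun a => isEmptyElim a,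
      fun i => ⟨fun a _ => isEmptyElim a, fun a _ => isEmptyElim a⟩⟩
  rw [bisoCount]
  haveI : Nonempty {f : α → β //
      (∀ a b, F.Adj a b → G.Adj (f a) (f b)) ∧
      ∀ i : Fin r, Set.InjOn f (bag i) ∧
        ∀ a ∈ bag i, ∀ b ∈ bag i, (F.Adj a b ↔ G.Adj (f a) (f b))} :=
    ⟨⟨fun a => isEmptyElim a, hall _⟩⟩
  haveI : Subsingleton (α → β) := ⟨fun f g => funext fun a => isEmptyElim a⟩
  exact Nat.card_unique

lemma bisoCount_of_isEmpty_codomain {α β : Type*} [Nonempty α] [IsEmpty β]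
    (F : SimpleGraph α) {r : ℕ} (bag : Fin r → Finset α) (G : SimpleGraph β) :
    bisoCount F bag G = 0 := by
  rw [bisoCount]
  haveI : IsEmpty {f : α → β //
      (∀ a b, F.Adj a b → G.Adj (f a) (f b)) ∧
      ∀ i : Fin r, Set.InjOn f (bag i) ∧
        ∀ a ∈ bag i, ∀ b ∈ bag i, (F.Adj a b ↔ G.Adj (f a) (f b))} :=
    ⟨fun s => isEmptyElim (s.1 (Classical.arbitrary α))⟩
  exact Nat.card_of_isEmpty

lemma UU_top {F : SimpleGraph (Fin p)} {bag : Fin r → Finset (Fin p)}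
    (hdec : IsPathDecomp F bag) : UU bag r = Finset.univ := by
  ext a
  simp only [Finset.mem_univ, iff_true, mem_UU]
  obtain ⟨j, hj⟩ := hdec.1 a
  exact ⟨j, j.isLt, hj⟩

lemma bisoCount_eq_card {β : Type*} [Fintype β] [DecidableEq β]
    {F : SimpleGraph (Fin p)} {bag : Fin r → Finset (Fin p)}
    (hdec : IsPathDecomp F bag) (G : SimpleGraph β) (d : β) :
    bisoCount F bag G = (Finset.univ.filter (goodF F G bag r d)).card := by
  rw [bisoCount, Nat.card_eq_fintype_card, Fintype.card_subtype]
  congr 1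
  apply Finset.filter_congr
  intro f _
  constructor
  · rintro ⟨hom, hbags⟩
    refine ⟨fun a ha => absurd (by rw [UU_top hdec]; exact Finset.mem_univ a) ha,
      fun j _ => ⟨(hbags j).1, (hbags j).2⟩⟩
  · rintro ⟨hsupp, hbags⟩
    refine ⟨?_, fun j => ⟨(hbags j j.isLt).1, (hbags j j.isLt).2⟩⟩
    intro a b hab
    obtain ⟨i0, ha, hb⟩ := hdec.2.1 a b hab
    exact ((hbags i0 i0.isLt).2 a ha b hb).1 hab

end Stmt18Aux

attribute [local instance] Classical.propDecidable

theorem stmt18 (k : ℕ) (hk : 1 ≤ k) {V W : Type*} [Fintype V] [Fintype W]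
    [DecidableEq V] [DecidableEq W]
    (G : SimpleGraph V) (H : SimpleGraph W)
    (hX : ∃ X : Finset (V × W) → ℝ, IsLisoSolution (k + 1) G H X) :
    ∀ (p : ℕ) (F : SimpleGraph (Fin p)) (r : ℕ) (bag : Fin r → Finset (Fin p)),
      IsPathDecomp F bag → (∀ i, (bag i).card ≤ k + 1) →
      bisoCount F bag G = bisoCount F bag H := by
  obtain ⟨X, hXs⟩ := hX
  intro p F r bag hdec hwidth
  by_cases hp : Nonempty (Fin p)
  swap
  · haveI := not_nonempty_iff.1 hp
    rw [Stmt18Aux.bisoCount_of_isEmpty, Stmt18Aux.bisoCount_of_isEmpty]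
  by_cases hV : Nonempty V
  swap
  · haveI hVe := not_nonempty_iff.1 hV
    by_cases hW : Nonempty W
    · exfalso
      obtain ⟨w⟩ := hW
      have h1 := hXs.1 ∅ (by simp) w
      rw [hXs.2.2.2] at h1
      simp only [Finset.univ_eq_empty, Finset.sum_empty] at h1
      exact absurd h1 (by norm_num)
    · haveI hWe := not_nonempty_iff.1 hW
      haveI := hp
      rw [Stmt18Aux.bisoCount_of_isEmpty_codomain, Stmt18Aux.bisoCount_of_isEmpty_codomain]
  by_cases hW : Nonempty W
  swap
  · exfalso
    haveI hWe := not_nonempty_iff.1 hW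
    obtain ⟨v⟩ := hV
    have h1 := hXs.2.1 ∅ (by simp) v
    rw [hXs.2.2.2] at h1
    simp only [Finset.univ_eq_empty, Finset.sum_empty] at h1
    exact absurd h1 (by norm_num)
  obtain ⟨a0⟩ := hp
  obtain ⟨dV⟩ := hV
  obtain ⟨dW⟩ := hW
  cases r with
  | zero =>
    obtain ⟨i0, _⟩ := hdec.1 a0
    exact i0.elim0
  | succ m =>
    have hm : m < m + 1 := Nat.lt_succ_self m
    have hB'dec : ((m + 1 = 0 ∧ bag ⟨m, hm⟩ = ∅)
        ∨ ∃ j : Fin (m + 1), (j : ℕ) + 1 = m + 1 ∧ bag ⟨m, hm⟩ = bag j) :=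
      Or.inr ⟨⟨m, hm⟩, rfl, rfl⟩
    have hinv := Stmt18Aux.invariant (k := k) hdec hwidth hXs dV dW (m + 1) le_rfl
      (bag ⟨m, hm⟩) hB'dec
    have hone : ∀ g : Fin p → V,
        ∑ μ ∈ Stmt18Aux.Fn (bag ⟨m, hm⟩) dW, X (Stmt18Aux.pmapF (bag ⟨m, hm⟩) g μ) = 1 := by
      intro g
      have hso := Stmt18Aux.sumOutW hXs dW g (bag ⟨m, hm⟩) ∅ (by simpa using hwidth ⟨m, hm⟩)
      rw [hXs.2.2.2] at hso
      rw [← hso]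
      refine Finset.sum_congr rfl fun μ _ => ?_
      congr 1
      rw [Finset.empty_union]
      rfl
    have lhs_tot :
        ∑ μ ∈ Stmt18Aux.Fn (bag ⟨m, hm⟩) dW,
          ∑ g ∈ Finset.univ.filter (Stmt18Aux.goodF F G bag (m + 1) dV),
            X (Stmt18Aux.pmapF (bag ⟨m, hm⟩) g μ)
        = ((Finset.univ.filter (Stmt18Aux.goodF F G bag (m + 1) dV)).card : ℝ) := by
      rw [Finset.sum_comm]
      rw [Finset.sum_congr rfl fun g _ => hone g]
      rw [Finset.sum_const, nsmul_eq_mul, mul_one]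
    have hcomb : ∀ μ : Fin p → W, ∀ a ∈ bag ⟨m, hm⟩,
        Stmt18Aux.comb (bag ⟨m, hm⟩) (fun _ => dW) μ a = μ a := by
      intro μ a ha
      simp only [Stmt18Aux.comb, if_pos ha]
    have hper : ∀ μ : Fin p → W,
        ∑ g ∈ Finset.univ.filter (Stmt18Aux.goodF F G bag (m + 1) dV),
          X (Stmt18Aux.pmapF (bag ⟨m, hm⟩) g μ)
        = ((Finset.univ.filter fun h' => Stmt18Aux.goodF F H bag (m + 1) dW h' ∧
            ∀ a ∈ bag ⟨m, hm⟩, h' a = Stmt18Aux.comb (bag ⟨m, hm⟩) (fun _ => dW) μ a).card : ℝ) := by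
      intro μ
      have := hinv (Stmt18Aux.comb (bag ⟨m, hm⟩) (fun _ => dW) μ)
      rw [← this]
      refine Finset.sum_congr rfl fun g _ => ?_
      congr 1
      exact (Stmt18Aux.pmapF_congr (fun a _ => rfl) (hcomb μ)).symm
    have hagr := Stmt18Aux.sum_card_agree (p := p) (Stmt18Aux.goodF F H bag (m + 1) dW)
      (bag ⟨m, hm⟩) ∅ (Finset.empty_subset _) dW (fun _ => dW)
    rw [Finset.sdiff_empty] at hagr
    have rhs_tot :
        ((Finset.univ.filter (Stmt18Aux.goodF F G bag (m + 1) dV)).card : ℝ)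
        = ((Finset.univ.filter (Stmt18Aux.goodF F H bag (m + 1) dW)).card : ℝ) := by
      rw [← lhs_tot]
      rw [Finset.sum_congr rfl fun μ _ => hper μ]
      rw [hagr]
      have heq : (Finset.univ.filter fun h' => Stmt18Aux.goodF F H bag (m + 1) dW h' ∧
            ∀ a ∈ (∅ : Finset (Fin p)), h' a = dW)
          = Finset.univ.filter (Stmt18Aux.goodF F H bag (m + 1) dW) :=
        Finset.filter_congr fun x _ => by simp
      rw [heq]
    rw [Stmt18Aux.bisoCount_eq_card hdec G dV, Stmt18Aux.bisoCount_eq_card hdec H dW]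
    exact_mod_cast rhs_tot
end

section
/- Let k ≥ 1 be an integer, let G and H be finite simple graphs with vertex sets V and W, and let (X_π) be a real solution of L^{k+1}_iso(G,H). Let F be a finite simple graph with a path decomposition P = (X_1, Y_1, X_2, …, Y_{ℓ−1}, X_ℓ) in which |X_i| = k for all i, |Y_i| = k+1 for all i, and X_i ⊆ Y_i ⊇ X_{i+1} for all i, and write X_1 = {u_1, …, u_k}. Then for every tuple (v_1,…,v_k) ∈ V^k: biso((F,P),G | u_1…u_k ↦ v_1…v_k) = Σ_{(w_1,…,w_k)∈W^k} X_{{(v_1,w_1),…,(v_k,w_k)}} · biso((F,P),H | u_1…u_k ↦ w_1…w_k). -/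
/-- The number of bag-wise isomorphic homomorphisms from `(F, bag)` to `G` that in
addition map the distinguished vertices `u 1, …, u k` to `v 1, …, v k`. -/
noncomputable def bisoCondCount {α V : Type*} (F : SimpleGraph α) {r : ℕ}
    (bag : Fin r → Finset α) (G : SimpleGraph V) {k : ℕ}
    (u : Fin k → α) (v : Fin k → V) : ℕ :=
  Nat.card {f : α → V //
    (∀ a b, F.Adj a b → G.Adj (f a) (f b)) ∧
    (∀ i : Fin r, Set.InjOn f (bag i) ∧
      ∀ a ∈ bag i, ∀ b ∈ bag i, (F.Adj a b ↔ G.Adj (f a) (f b))) ∧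
    (∀ i : Fin k, f (u i) = v i)}

section AuxAll
variable {p : ℕ} {V : Type*} [Fintype V]


open Classical in
noncomputable def EN (dV : V) (B : Finset (Fin p)) : Finset (Fin p → V) :=
  Finset.univ.filter (fun ψ => ∀ a ∉ B, ψ a = dV)

lemma mem_EN {dV : V} {B : Finset (Fin p)} {ψ : Fin p → V} :
    ψ ∈ EN dV B ↔ ∀ a ∉ B, ψ a = dV := by simp [EN]

lemma EN_empty (dV : V) : EN (p := p) dV ∅ = {fun _ => dV} := by
  ext ψ
  simp only [mem_EN, Finset.notMem_empty, not_false_iff, forall_true_left,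
    Finset.mem_singleton]
  constructor
  · intro h; funext a; exact h a
  · intro h a; rw [h]

lemma sum_EN_insert {M : Type*} [AddCommMonoid M] (dV : V) {a : Fin p}
    {B : Finset (Fin p)} (ha : a ∉ B) (f : (Fin p → V) → M) :
    ∑ ψ ∈ EN dV (insert a B), f ψ =
      ∑ v : V, ∑ ψ ∈ EN dV B, f (Function.update ψ a v) := by
  classical
  have h1 : ∑ ψ ∈ EN dV (insert a B), f ψ =
      ∑ x ∈ (Finset.univ : Finset V) ×ˢ EN dV B, f (Function.update x.2 a x.1) := by
    refine Finset.sum_nbij' (fun ψ => (ψ a, Function.update ψ a dV))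
      (fun x => Function.update x.2 a x.1) ?_ ?_ ?_ ?_ ?_
    · intro ψ hψ
      rw [Finset.mem_product]
      refine ⟨Finset.mem_univ _, mem_EN.2 fun b hb => ?_⟩
      rcases eq_or_ne b a with h | h
      · subst h; simp [Function.update_apply]
      · simp only [Function.update_apply, if_neg h]
        exact mem_EN.1 hψ b (by simp [h, hb])
    · intro x hx
      rw [Finset.mem_product] at hx
      refine mem_EN.2 fun b hb => ?_
      have hba : b ≠ a := fun h => hb (h ▸ Finset.mem_insert_self a B)
      simp only [Function.update_apply, if_neg hba]
      exact mem_EN.1 hx.2 b (fun h => hb (Finset.mem_insert_of_mem h))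
    · intro ψ hψ
      dsimp only
      funext b
      rcases eq_or_ne b a with h | h
      · subst h; simp [Function.update_apply]
      · simp [Function.update_apply, if_neg h]
    · intro x hx
      rw [Finset.mem_product] at hx
      refine Prod.ext (by simp [Function.update_apply]) ?_
      funext b
      rcases eq_or_ne b a with h | h
      · subst h
        simp only [Function.update_apply, if_pos rfl]
        exact (mem_EN.1 hx.2 b ha).symm
      · simp [Function.update_apply, if_neg h]
    · intro ψ hψ
      dsimp only
      congr 1
      funext b
      rcases eq_or_ne b a with h | h
      · subst h; simp [Function.update_apply]
      · simp [Function.update_apply, if_neg h]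
  rw [h1, Finset.sum_product]

lemma sum_D [DecidableEq V] {M : Type*} [AddCommMonoid M] (dV : V) {a : Fin p}
    {B : Finset (Fin p)} (ha : a ∉ B) (φ : Fin p → V) (f : (Fin p → V) → M) :
    ∑ φ' ∈ (EN dV (insert a B)).filter (fun φ' => ∀ b ∈ B, φ' b = φ b), f φ' =
      ∑ v : V, f (Function.update (fun b => if b ∈ B then φ b else dV) a v) := by
  classical
  refine Finset.sum_nbij' (fun φ' => φ' a)
    (fun v => Function.update (fun b => if b ∈ B then φ b else dV) a v)
    (fun _ _ => Finset.mem_univ _) ?_ ?_ ?_ ?_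
  · intro v _
    rw [Finset.mem_filter]
    refine ⟨mem_EN.2 fun b hb => ?_, fun b hb => ?_⟩
    · have hba : b ≠ a := fun h => hb (h ▸ Finset.mem_insert_self a B)
      have hbB : b ∉ B := fun h => hb (Finset.mem_insert_of_mem h)
      simp [Function.update_apply, if_neg hba, if_neg hbB]
    · have hba : b ≠ a := fun h => ha (h ▸ hb)
      simp [Function.update_apply, if_neg hba, if_pos hb]
  · intro φ' hφ'
    rw [Finset.mem_filter] at hφ'
    funext b
    rcases eq_or_ne b a with h | h
    · subst h; simp [Function.update_apply]
    · simp only [Function.update_apply, if_neg h]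
      by_cases hbB : b ∈ B
      · rw [if_pos hbB]; exact (hφ'.2 b hbB).symm
      · rw [if_neg hbB]
        exact (mem_EN.1 hφ'.1 b (by simp [h, hbB])).symm
  · intro v _; simp [Function.update_apply]
  · intro φ' hφ'
    rw [Finset.mem_filter] at hφ'
    congr 1
    funext b
    rcases eq_or_ne b a with h | h
    · subst h; simp [Function.update_apply]
    · simp only [Function.update_apply, if_neg h]
      by_cases hbB : b ∈ B
      · rw [if_pos hbB]; exact hφ'.2 b hbB
      · rw [if_neg hbB]
        exact mem_EN.1 hφ'.1 b (by simp [h, hbB])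

/-- `g` restricted to `B` is an isomorphism onto its image pattern. -/
def IsoOn {p : ℕ} {V : Type*} (F : SimpleGraph (Fin p)) (G : SimpleGraph V)
    (g : Fin p → V) (B : Finset (Fin p)) : Prop :=
  Set.InjOn g ↑B ∧ ∀ a ∈ B, ∀ b ∈ B, (F.Adj a b ↔ G.Adj (g a) (g b))

lemma isoOn_congr {p : ℕ} {V : Type*} {F : SimpleGraph (Fin p)} {G : SimpleGraph V}
    {g g' : Fin p → V} {B : Finset (Fin p)} (h : ∀ a ∈ B, g a = g' a) :
    IsoOn F G g B ↔ IsoOn F G g' B := by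
  unfold IsoOn
  constructor <;> rintro ⟨h1, h2⟩ <;> constructor
  · intro a ha b hb hab
    exact h1 ha hb (by rw [h a ha, h b hb]; exact hab)
  · intro a ha b hb
    rw [← h a ha, ← h b hb]; exact h2 a ha b hb
  · intro a ha b hb hab
    exact h1 ha hb (by rw [← h a ha, ← h b hb]; exact hab)
  · intro a ha b hb
    rw [h a ha, h b hb]; exact h2 a ha b hb

/-- The predicate counted by `cnt`. -/
def cntPred {p r : ℕ} {V : Type*} (F : SimpleGraph (Fin p)) (G : SimpleGraph V)
    (bag : Fin r → Finset (Fin p)) (dV : V) (i : Fin r) (φ : Fin p → V)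
    (g : Fin p → V) : Prop :=
  (∀ j, i ≤ j → IsoOn F G g (bag j)) ∧ (∀ a ∈ bag i, g a = φ a) ∧
    (∀ a, (∀ j, i ≤ j → a ∉ bag j) → g a = dV)

open Classical in
noncomputable def cnt {p r : ℕ} {V : Type*} [Fintype V] (F : SimpleGraph (Fin p))
    (G : SimpleGraph V) (bag : Fin r → Finset (Fin p)) (dV : V) (i : Fin r)
    (φ : Fin p → V) : ℕ :=
  (Finset.univ.filter (cntPred F G bag dV i φ)).card

lemma cnt_congr {p r : ℕ} {V : Type*} [Fintype V] (F : SimpleGraph (Fin p))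
    (G : SimpleGraph V) (bag : Fin r → Finset (Fin p)) (dV : V) (i : Fin r)
    {φ φ' : Fin p → V} (h : ∀ a ∈ bag i, φ a = φ' a) :
    cnt F G bag dV i φ = cnt F G bag dV i φ' := by
  classical
  unfold cnt
  congr 1
  apply Finset.filter_congr
  intro g _
  unfold cntPred
  constructor <;> rintro ⟨h1, h2, h3⟩
  · exact ⟨h1, fun a ha => (h2 a ha).trans (h a ha), h3⟩
  · exact ⟨h1, fun a ha => (h2 a ha).trans (h a ha).symm, h3⟩



variable {p r : ℕ} {V : Type*} [Fintype V]
  {F : SimpleGraph (Fin p)} {G : SimpleGraph V}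
  {bag : Fin r → Finset (Fin p)} {dV : V}

open Classical in
lemma mem_cnt {i : Fin r} {φ g : Fin p → V} :
    g ∈ (Finset.univ.filter (cntPred F G bag dV i φ) :
        Finset (Fin p → V)) ↔ cntPred F G bag dV i φ g := by
  classical
  simp [Finset.mem_filter]

open Classical in
lemma cnt_top {i : Fin r} (htop : ∀ j, i ≤ j → j = i) (φ : Fin p → V) :
    cnt F G bag dV i φ = if IsoOn F G φ (bag i) then 1 else 0 := by
  classical
  unfold cnt
  by_cases hiso : IsoOn F G φ (bag i)
  · rw [if_pos hiso]
    have : (Finset.univ.filter (cntPred F G bag dV i φ) : Finset (Fin p → V)) =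
        {fun a => if a ∈ bag i then φ a else dV} := by
      ext g
      rw [Finset.mem_singleton]
      constructor
      · intro hg
        have hg' := mem_cnt.1 hg
        funext b
        by_cases hb : b ∈ bag i
        · rw [if_pos hb]; exact hg'.2.1 b hb
        · rw [if_neg hb]
          refine hg'.2.2 b fun j hj => ?_
          rw [htop j hj]; exact hb
      · rintro rfl
        refine mem_cnt.2 ⟨?_, ?_, ?_⟩
        · intro j hj
          rw [htop j hj]
          rw [isoOn_congr (g' := φ) (fun a ha => by rw [if_pos ha])]
          exact hiso
        · intro a ha; simp only [if_pos ha]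
        · intro a ha
          simp only [if_neg (ha i (le_refl i))]
    rw [this, Finset.card_singleton]
  · rw [if_neg hiso]
    rw [Finset.card_eq_zero]
    rw [Finset.eq_empty_iff_forall_notMem]
    intro g hg
    have hg' := mem_cnt.1 hg
    exact hiso ((isoOn_congr (g := g) (g' := φ) (fun a ha => hg'.2.1 a ha)).1
      (hg'.1 i (le_refl i)))


lemma isoOn_subset {p : ℕ} {V : Type*} {F : SimpleGraph (Fin p)} {G : SimpleGraph V}
    {g : Fin p → V} {B B' : Finset (Fin p)} (h : IsoOn F G g B') (hs : B ⊆ B') :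
    IsoOn F G g B :=
  ⟨h.1.mono (Finset.coe_subset.2 hs), fun a ha b hb => h.2 a (hs ha) b (hs hb)⟩

section A4
variable {p r : ℕ} {V : Type*} [Fintype V]
  {F : SimpleGraph (Fin p)} {G : SimpleGraph V}
  {bag : Fin r → Finset (Fin p)} {dV : V}

lemma cnt_even [DecidableEq V] {i i' : Fin r} (hsucc : ∀ j : Fin r, i ≤ j ↔ j = i ∨ i' ≤ j)
    (hsub : bag i ⊆ bag i') (φ : Fin p → V) :
    cnt F G bag dV i φ =
      ∑ φ' ∈ (EN dV (bag i')).filter (fun φ' => ∀ a ∈ bag i, φ' a = φ a),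
        cnt F G bag dV i' φ' := by
  classical
  unfold cnt
  set nf : (Fin p → V) → (Fin p → V) := fun g a => if a ∈ bag i' then g a else dV with hnf
  rw [Finset.card_eq_sum_card_fiberwise (f := nf)
    (t := (EN dV (bag i')).filter (fun φ' => ∀ a ∈ bag i, φ' a = φ a))]
  · apply Finset.sum_congr rfl
    intro φ' hφ'
    rw [Finset.mem_filter] at hφ'
    congr 1
    ext g
    rw [Finset.mem_filter]
    constructor
    · rintro ⟨hg, he⟩
      have hP := (Finset.mem_filter.1 hg).2
      have h1 := hP.1
      have h2 := hP.2.1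
      have h3 := hP.2.2
      refine Finset.mem_filter.2 ⟨Finset.mem_univ _, ?_, ?_, ?_⟩
      · intro j hj
        exact h1 j ((hsucc j).2 (Or.inr hj))
      · intro a ha
        rw [← he]
        simp only [nf, if_pos ha]
      · intro a ha
        apply h3
        intro j hj
        rcases (hsucc j).1 hj with rfl | hj'
        · intro haj
          exact ha i' (le_refl i') (hsub haj)
        · exact ha j hj'
    · intro hg
      have hP := (Finset.mem_filter.1 hg).2
      have h1 := hP.1
      have h2 := hP.2.1
      have h3 := hP.2.2
      refine ⟨Finset.mem_filter.2 ⟨Finset.mem_univ _, ?_, ?_, ?_⟩, ?_⟩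
      · intro j hj
        rcases (hsucc j).1 hj with rfl | hj'
        · exact isoOn_subset (h1 i' (le_refl i')) hsub
        · exact h1 j hj'
      · intro a ha
        rw [h2 a (hsub ha)]
        exact hφ'.2 a ha
      · intro a ha
        apply h3
        intro j hj
        exact ha j ((hsucc j).2 (Or.inr hj))
      · funext a
        by_cases ha : a ∈ bag i'
        · simp only [nf, if_pos ha]
          exact h2 a ha
        · simp only [nf, if_neg ha]
          exact (mem_EN.1 hφ'.1 a ha).symm
  · intro g hg
    have hP := (Finset.mem_filter.1 hg).2
    rw [Finset.mem_coe, Finset.mem_filter]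
    refine ⟨mem_EN.2 fun a ha => by simp only [nf, if_neg ha], ?_⟩
    intro a ha
    simp only [nf, if_pos (hsub ha)]
    exact hP.2.1 a ha

open Classical in
lemma cnt_odd {i i' : Fin r} (hsucc : ∀ j : Fin r, i ≤ j ↔ j = i ∨ i' ≤ j)
    (hsub : bag i' ⊆ bag i)
    (hmid : ∀ a ∈ bag i, ∀ j, i' ≤ j → a ∈ bag j → a ∈ bag i')
    (φ : Fin p → V) :
    cnt F G bag dV i φ =
      (if IsoOn F G φ (bag i) then 1 else 0) * cnt F G bag dV i' φ := by
  classical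
  by_cases hiso : IsoOn F G φ (bag i)
  · rw [if_pos hiso, one_mul]
    unfold cnt
    refine Finset.card_nbij'
      (fun g a => if (∃ j, i' ≤ j ∧ a ∈ bag j) then g a else dV)
      (fun g' a => if a ∈ bag i then φ a else g' a) ?_ ?_ ?_ ?_
    · intro g hg
      have hP := (Finset.mem_filter.1 hg).2
      have h1 := hP.1
      have h2 := hP.2.1
      have h3 := hP.2.2
      refine Finset.mem_filter.2 ⟨Finset.mem_univ _, ?_, ?_, ?_⟩
      · intro j hj
        rw [isoOn_congr (g' := g) (fun a ha => by
          have hex : ∃ j, i' ≤ j ∧ a ∈ bag j := ⟨j, hj, ha⟩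
          simp only [if_pos hex])]
        exact h1 j ((hsucc j).2 (Or.inr hj))
      · intro a ha
        have hex : ∃ j, i' ≤ j ∧ a ∈ bag j := ⟨i', le_refl i', ha⟩
        simp only [if_pos hex]
        exact h2 a (hsub ha)
      · intro a ha
        have hex : ¬ (∃ j, i' ≤ j ∧ a ∈ bag j) := by
          rintro ⟨j, hj, haj⟩
          exact ha j hj haj
        simp only [if_neg hex]
    · intro g' hg'
      have hP := (Finset.mem_filter.1 hg').2
      have h1 := hP.1
      have h2 := hP.2.1
      have h3 := hP.2.2
      refine Finset.mem_filter.2 ⟨Finset.mem_univ _, ?_, ?_, ?_⟩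
      · intro j hj
        rcases (hsucc j).1 hj with rfl | hj'
        · rw [isoOn_congr (g' := φ) (fun a ha => by simp only [if_pos ha])]
          exact hiso
        · rw [isoOn_congr (g' := g') (fun a ha => ?_)]
          · exact h1 j hj'
          · by_cases hai : a ∈ bag i
            · simp only [if_pos hai]
              exact (h2 a (hmid a hai j hj' ha)).symm
            · simp only [if_neg hai]
      · intro a ha
        simp only [if_pos ha]
      · intro a ha
        have hai : a ∉ bag i := ha i (le_refl i)
        simp only [if_neg hai]
        apply h3
        intro j hj
        exact ha j ((hsucc j).2 (Or.inr hj))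
    · intro g hg
      have hP := (Finset.mem_filter.1 hg).2
      have h2 := hP.2.1
      have h3 := hP.2.2
      funext a
      dsimp only
      by_cases hai : a ∈ bag i
      · rw [if_pos hai]
        exact (h2 a hai).symm
      · rw [if_neg hai]
        by_cases hex : ∃ j, i' ≤ j ∧ a ∈ bag j
        · rw [if_pos hex]
        · rw [if_neg hex]
          refine (h3 a ?_).symm
          intro j hj
          rcases (hsucc j).1 hj with rfl | hj'
          · exact hai
          · exact fun haj => hex ⟨j, hj', haj⟩
    · intro g' hg'
      have hP := (Finset.mem_filter.1 hg').2
      have h2 := hP.2.1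
      have h3 := hP.2.2
      funext a
      dsimp only
      by_cases hex : ∃ j, i' ≤ j ∧ a ∈ bag j
      · rw [if_pos hex]
        by_cases hai : a ∈ bag i
        · rw [if_pos hai]
          obtain ⟨j, hj, haj⟩ := hex
          exact (h2 a (hmid a hai j hj haj)).symm
        · rw [if_neg hai]
      · rw [if_neg hex]
        refine (h3 a ?_).symm
        intro j hj haj
        exact hex ⟨j, hj, haj⟩
  · rw [if_neg hiso, zero_mul]
    unfold cnt
    rw [Finset.card_eq_zero, Finset.eq_empty_iff_forall_notMem]
    intro g hg
    have hP := (Finset.mem_filter.1 hg).2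
    exact hiso ((isoOn_congr (g := g) (g' := φ) (fun a ha => hP.2.1 a ha)).1
      (hP.1 i (le_refl i)))

end A4

section A5
variable {p : ℕ} {V W : Type*} [Fintype V] [Fintype W] [DecidableEq V] [DecidableEq W]
  {F : SimpleGraph (Fin p)} {G : SimpleGraph V} {H : SimpleGraph W}

omit [Fintype V] [Fintype W] in
lemma transferGH {B : Finset (Fin p)} {φ : Fin p → V} {ψ : Fin p → W}
    (hφ : IsoOn F G φ B)
    (hπ : IsPartialIso G H (B.image fun a => (φ a, ψ a))) : IsoOn F H ψ B := by
  have hmem : ∀ a ∈ B, (φ a, ψ a) ∈ B.image fun a => (φ a, ψ a) := fun a ha =>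
    Finset.mem_image.2 ⟨a, ha, rfl⟩
  constructor
  · intro a ha b hb hab
    have h := hπ _ (hmem a ha) _ (hmem b hb)
    exact hφ.1 ha hb (h.1.2 hab)
  · intro a ha b hb
    rw [hφ.2 a ha b hb]
    exact (hπ _ (hmem a ha) _ (hmem b hb)).2

omit [Fintype V] [Fintype W] in
lemma transferHG {B : Finset (Fin p)} {φ : Fin p → V} {ψ : Fin p → W}
    (hψ : IsoOn F H ψ B)
    (hπ : IsPartialIso G H (B.image fun a => (φ a, ψ a))) : IsoOn F G φ B := by
  have hmem : ∀ a ∈ B, (φ a, ψ a) ∈ B.image fun a => (φ a, ψ a) := fun a ha =>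
    Finset.mem_image.2 ⟨a, ha, rfl⟩
  constructor
  · intro a ha b hb hab
    have h := hπ _ (hmem a ha) _ (hmem b hb)
    exact hψ.1 ha hb (h.1.1 hab)
  · intro a ha b hb
    rw [hψ.2 a ha b hb]
    exact ((hπ _ (hmem a ha) _ (hmem b hb)).2).symm

lemma margin (X : Finset (V × W) → ℝ) (K : ℕ)
    (hL2 : ∀ π : Finset (V × W), π.card + 1 ≤ K → ∀ v : V,
      ∑ w : W, X (insert (v, w) π) = X π)
    (dW : W) (B : Finset (Fin p)) :
    ∀ π₀ : Finset (V × W), π₀.card + B.card ≤ K → ∀ φ : Fin p → V,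
      ∑ ψ ∈ EN dW B, X (π₀ ∪ B.image fun a => (φ a, ψ a)) = X π₀ := by
  classical
  induction B using Finset.induction_on with
  | empty =>
    intro π₀ hcard φ
    rw [EN_empty, Finset.sum_singleton, Finset.image_empty, Finset.union_empty]
  | @insert a B ha ih =>
    intro π₀ hcard φ
    rw [sum_EN_insert (dV := dW) ha]
    have himg : ∀ (ψ : Fin p → W) (w : W),
        ((insert a B).image fun b => (φ b, Function.update ψ a w b)) =
          insert (φ a, w) (B.image fun b => (φ b, ψ b)) := by
      intro ψ w
      rw [Finset.image_insert]
      congr 1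
      · rw [Function.update_self]
      · apply Finset.image_congr
        intro b hb
        have hbB : b ∈ B := hb
        dsimp only
        rw [Function.update_of_ne (fun h : b = a => ha (h ▸ hbB))]
    have hcard' : π₀.card + B.card + 1 ≤ K := by
      rw [Finset.card_insert_of_notMem ha] at hcard
      omega
    calc ∑ w : W, ∑ ψ ∈ EN dW B,
          X (π₀ ∪ (insert a B).image fun b => (φ b, Function.update ψ a w b))
        = ∑ ψ ∈ EN dW B, ∑ w : W,
            X (insert (φ a, w) (π₀ ∪ B.image fun b => (φ b, ψ b))) := by
          rw [Finset.sum_comm]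
          apply Finset.sum_congr rfl
          intro ψ _
          apply Finset.sum_congr rfl
          intro w _
          rw [himg ψ w, Finset.union_insert]
      _ = ∑ ψ ∈ EN dW B, X (π₀ ∪ B.image fun b => (φ b, ψ b)) := by
          apply Finset.sum_congr rfl
          intro ψ _
          apply hL2
          have := Finset.card_union_le π₀ (B.image fun b => (φ b, ψ b))
          have := Finset.card_image_le (s := B) (f := fun b => (φ b, ψ b))
          omega
      _ = X π₀ := ih π₀ (by omega) φ
end A5

section A6
variable {p r k : ℕ} {V : Type*} [Fintype V]

open Classical in
lemma cnt_eq_biso (F : SimpleGraph (Fin p)) (G : SimpleGraph V)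
    (bag : Fin r → Finset (Fin p)) (dV : V) (hr : 0 < r)
    (hdec : IsPathDecomp F bag) (u : Fin k → Fin p) (hu : Function.Injective u)
    (hbag0 : bag ⟨0, hr⟩ = Finset.univ.image u) (v : Fin k → V) :
    cnt F G bag dV ⟨0, hr⟩ (fun a => if h : ∃ i, u i = a then v h.choose else dV) =
      bisoCondCount F bag G u v := by
  classical
  have hφv : ∀ i : Fin k,
      (fun a => if h : ∃ i, u i = a then v h.choose else dV) (u i) = v i := by
    intro i
    have h : ∃ j, u j = u i := ⟨i, rfl⟩
    simp only [dif_pos h]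
    exact congrArg v (hu h.choose_spec)
  have hzero : ∀ j : Fin r, (⟨0, hr⟩ : Fin r) ≤ j := by
    intro j; rw [Fin.le_def]; exact Nat.zero_le _
  unfold bisoCondCount
  rw [Nat.card_eq_fintype_card, Fintype.card_subtype]
  unfold cnt
  congr 1
  apply Finset.filter_congr
  intro g _
  constructor
  · intro hQ
    have h1 := hQ.1
    refine ⟨?_, ?_, ?_⟩
    · intro a b hab
      obtain ⟨j, haj, hbj⟩ := hdec.2.1 a b hab
      exact ((h1 j (hzero j)).2 a haj b hbj).1 hab
    · intro j
      exact h1 j (hzero j)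
    · intro i
      have hmem : u i ∈ bag ⟨0, hr⟩ := by
        rw [hbag0]
        exact Finset.mem_image.2 ⟨i, Finset.mem_univ _, rfl⟩
      rw [hQ.2.1 (u i) hmem]
      exact hφv i
  · intro hP
    refine ⟨fun j _ => hP.2.1 j, ?_, ?_⟩
    · intro a ha
      rw [hbag0] at ha
      obtain ⟨i, -, rfl⟩ := Finset.mem_image.1 ha
      rw [hP.2.2 i]
      exact (hφv i).symm
    · intro a ha
      obtain ⟨j, hj⟩ := hdec.1 a
      exact absurd hj (ha j (hzero j))

open Classical in
lemma sum_EN_bag0 {W : Type*} [Fintype W] (bag : Fin r → Finset (Fin p)) (dW : W)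
    (hr : 0 < r) (u : Fin k → Fin p) (hu : Function.Injective u)
    (hbag0 : bag ⟨0, hr⟩ = Finset.univ.image u)
    (f : (Fin p → W) → ℝ) (g : (Fin k → W) → ℝ)
    (hfg : ∀ w : Fin k → W,
      g w = f (fun a => if h : ∃ i, u i = a then w h.choose else dW)) :
    ∑ w : Fin k → W, g w = ∑ ψ ∈ EN dW (bag ⟨0, hr⟩), f ψ := by
  classical
  refine Finset.sum_nbij' (fun w a => if h : ∃ i, u i = a then w h.choose else dW)
    (fun ψ i => ψ (u i)) ?_ (fun _ _ => Finset.mem_univ _) ?_ ?_ ?_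
  · intro w _
    refine mem_EN.2 fun a ha => ?_
    rw [hbag0] at ha
    have hne : ¬ ∃ i, u i = a := by
      rintro ⟨i, rfl⟩
      exact ha (Finset.mem_image.2 ⟨i, Finset.mem_univ _, rfl⟩)
    simp only [dif_neg hne]
  · intro w _
    funext i
    have h : ∃ j, u j = u i := ⟨i, rfl⟩
    simp only [dif_pos h]
    exact congrArg w (hu h.choose_spec)
  · intro ψ hψ
    funext a
    by_cases h : ∃ i, u i = a
    · simp only [dif_pos h]
      rw [h.choose_spec]
    · simp only [dif_neg h]
      refine (mem_EN.1 hψ a ?_).symm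
      rw [hbag0]
      intro ha
      obtain ⟨i, -, rfl⟩ := Finset.mem_image.1 ha
      exact h ⟨i, rfl⟩
  · intro w _
    exact hfg w
end A6

section A7
variable {p : ℕ} {V : Type*} [Fintype V]

lemma sum_EN_fiber [DecidableEq V] {M : Type*} [AddCommMonoid M] (dV : V) {B B' : Finset (Fin p)}
    (hsub : B ⊆ B') (f : (Fin p → V) → M) :
    ∑ ψ ∈ EN dV B, ∑ ψ' ∈ (EN dV B').filter (fun ψ' => ∀ b ∈ B, ψ' b = ψ b), f ψ' =
      ∑ ψ' ∈ EN dV B', f ψ' := by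
  classical
  rw [← Finset.sum_fiberwise_of_maps_to
    (g := fun (ψ' : Fin p → V) (b : Fin p) => if b ∈ B then ψ' b else dV)
    (t := EN dV B) (fun ψ' hψ' => mem_EN.2 fun b hb => by simp only [if_neg hb]) f]
  apply Finset.sum_congr rfl
  intro ψ hψ
  apply Finset.sum_congr _ (fun _ _ => rfl)
  apply Finset.filter_congr
  intro ψ' hψ'
  constructor
  · intro h
    funext b
    by_cases hb : b ∈ B
    · simp only [if_pos hb]; exact h b hb
    · simp only [if_neg hb]; exact (mem_EN.1 hψ b hb).symm
  · intro h b hb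
    have := congrFun h b
    simp only [if_pos hb] at this
    exact this
end A7

end AuxAll

lemma uval {k p : ℕ} {V : Type*} (u : Fin k → Fin p) (hu : Function.Injective u)
    (v : Fin k → V) (dV : V) (i : Fin k) :
    (fun a => if h : ∃ j, u j = a then v h.choose else dV) (u i) = v i := by
  have h : ∃ j, u j = u i := ⟨i, rfl⟩
  simp only [dif_pos h]
  exact congrArg v (hu h.choose_spec)

theorem stmt19 (k : ℕ) (hk : 1 ≤ k) {V W : Type*} [Fintype V] [Fintype W]
    [DecidableEq V] [DecidableEq W]
    (G : SimpleGraph V) (H : SimpleGraph W)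
    (X : Finset (V × W) → ℝ) (hX : IsLisoSolution (k + 1) G H X)
    (p : ℕ) (F : SimpleGraph (Fin p)) (ℓ : ℕ) (hℓ : 1 ≤ ℓ)
    (bag : Fin (2 * ℓ - 1) → Finset (Fin p))
    (hdec : IsPathDecomp F bag)
    (hsize : ∀ i : Fin (2 * ℓ - 1),
      (bag i).card = if (i : ℕ) % 2 = 0 then k else k + 1)
    (hincl : ∀ (i : ℕ) (hi : i + 1 < 2 * ℓ - 1),
      (i % 2 = 0 → bag ⟨i, by omega⟩ ⊆ bag ⟨i + 1, hi⟩) ∧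
      (i % 2 = 1 → bag ⟨i + 1, hi⟩ ⊆ bag ⟨i, by omega⟩))
    (u : Fin k → Fin p) (hu : Function.Injective u)
    (hbag0 : bag ⟨0, by omega⟩ = Finset.univ.image u) :
    ∀ v : Fin k → V,
      (bisoCondCount F bag G u v : ℝ) =
        ∑ w : Fin k → W,
          X (Finset.univ.image fun i => (v i, w i)) * (bisoCondCount F bag H u w : ℝ) := by
  intro v
  obtain ⟨hL1, hL2, hL3, hL4⟩ := hX
  have hr : 0 < 2 * ℓ - 1 := by omega
  have hrt : 2 * ℓ - 2 < 2 * ℓ - 1 := by omega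
  set dV : V := v ⟨0, hk⟩ with hdV
  have hWne : Nonempty W := by
    by_contra hW
    rw [not_nonempty_iff] at hW
    have h2 := hL2 ∅ (by simp) dV
    rw [hL4, Finset.univ_eq_empty, Finset.sum_empty] at h2
    exact one_ne_zero h2.symm
  obtain ⟨dW⟩ := hWne
  have htop : ∀ j : Fin (2 * ℓ - 1), (⟨2 * ℓ - 2, hrt⟩ : Fin (2 * ℓ - 1)) ≤ j →
      j = ⟨2 * ℓ - 2, hrt⟩ := by
    intro j hj
    rw [Fin.le_def] at hj
    have := j.2
    exact Fin.ext (by simp only [Fin.val_mk] at hj ⊢; omega)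
  -- base case of the downward induction
  have base : ∀ φ : Fin p → V,
      (cnt F G bag dV ⟨2 * ℓ - 2, hrt⟩ φ : ℝ) =
        ∑ ψ ∈ EN dW (bag ⟨2 * ℓ - 2, hrt⟩),
          X ((bag ⟨2 * ℓ - 2, hrt⟩).image fun a => (φ a, ψ a)) *
            (cnt F H bag dW ⟨2 * ℓ - 2, hrt⟩ ψ : ℝ) := by
    intro φ
    have hct : (bag ⟨2 * ℓ - 2, hrt⟩).card = k := by
      have h := hsize ⟨2 * ℓ - 2, hrt⟩
      rwa [if_pos (by simp only [Fin.val_mk]; omega)] at h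
    have hcard : ∀ ψ : Fin p → W,
        ((bag ⟨2 * ℓ - 2, hrt⟩).image fun a => (φ a, ψ a)).card ≤ k + 1 := by
      intro ψ
      have := Finset.card_image_le (s := bag ⟨2 * ℓ - 2, hrt⟩)
        (f := fun a => (φ a, ψ a))
      omega
    rw [cnt_top htop φ]
    by_cases hiso : IsoOn F G φ (bag ⟨2 * ℓ - 2, hrt⟩)
    · rw [if_pos hiso, Nat.cast_one]
      have hm := margin X (k + 1) hL2 dW (bag ⟨2 * ℓ - 2, hrt⟩) ∅
        (by rw [Finset.card_empty]; omega) φ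
      rw [hL4] at hm
      rw [← hm]
      apply Finset.sum_congr rfl
      intro ψ hψ
      rw [Finset.empty_union, cnt_top (G := H) (dV := dW) htop ψ]
      by_cases hisoH : IsoOn F H ψ (bag ⟨2 * ℓ - 2, hrt⟩)
      · rw [if_pos hisoH, Nat.cast_one, mul_one]
      · have hz : X ((bag ⟨2 * ℓ - 2, hrt⟩).image fun a => (φ a, ψ a)) = 0 :=
          hL3 _ (hcard ψ) (fun hpi => hisoH (transferGH hiso hpi))
        rw [hz, zero_mul]
    · rw [if_neg hiso, Nat.cast_zero]
      symm
      apply Finset.sum_eq_zero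
      intro ψ hψ
      rw [cnt_top (G := H) (dV := dW) htop ψ]
      by_cases hisoH : IsoOn F H ψ (bag ⟨2 * ℓ - 2, hrt⟩)
      · have hz : X ((bag ⟨2 * ℓ - 2, hrt⟩).image fun a => (φ a, ψ a)) = 0 :=
          hL3 _ (hcard ψ) (fun hpi => hiso (transferHG hisoH hpi))
        rw [hz, zero_mul]
      · rw [if_neg hisoH, Nat.cast_zero, mul_zero]
  -- the induction step
  have step : ∀ i i' : Fin (2 * ℓ - 1), (i : ℕ) + 1 = (i' : ℕ) →
      (∀ φ0 : Fin p → V, (cnt F G bag dV i' φ0 : ℝ) =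
        ∑ ψ ∈ EN dW (bag i'),
          X ((bag i').image fun a => (φ0 a, ψ a)) * (cnt F H bag dW i' ψ : ℝ)) →
      ∀ φ : Fin p → V, (cnt F G bag dV i φ : ℝ) =
        ∑ ψ ∈ EN dW (bag i),
          X ((bag i).image fun a => (φ a, ψ a)) * (cnt F H bag dW i ψ : ℝ) := by
    intro i i' hii' hCl φ
    have hsucc : ∀ j : Fin (2 * ℓ - 1), i ≤ j ↔ j = i ∨ i' ≤ j := by
      intro j
      rw [Fin.le_def, Fin.le_def, Fin.ext_iff]
      omega
    have hi1 : (i : ℕ) + 1 < 2 * ℓ - 1 := by have := i'.2; omega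
    have e2 : (⟨(i : ℕ) + 1, hi1⟩ : Fin (2 * ℓ - 1)) = i' := Fin.ext hii'
    rcases Nat.mod_two_eq_zero_or_one (i : ℕ) with hpar | hpar
    · -- even case : bag i ⊆ bag i'
      have hsub : bag i ⊆ bag i' := by
        have h := (hincl (i : ℕ) hi1).1 hpar
        rw [e2] at h
        exact h
      have hcti : (bag i).card = k := by
        have h := hsize i; rwa [if_pos hpar] at h
      have hcti' : (bag i').card = k + 1 := by
        have h := hsize i'
        rwa [if_neg (by omega : ¬ ((i' : ℕ) % 2 = 0))] at h
      have hsd : (bag i' \ bag i).card = 1 := by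
        rw [Finset.card_sdiff_of_subset hsub]; omega
      obtain ⟨a, haeq⟩ := Finset.card_eq_one.1 hsd
      have hamem := Finset.mem_sdiff.1 (haeq ▸ Finset.mem_singleton_self a)
      have hins : bag i' = insert a (bag i) := by
        ext b
        rw [Finset.mem_insert]
        constructor
        · intro hb
          by_cases hbB : b ∈ bag i
          · exact Or.inr hbB
          · left
            have hb' : b ∈ bag i' \ bag i := Finset.mem_sdiff.2 ⟨hb, hbB⟩
            rw [haeq] at hb'
            exact Finset.mem_singleton.1 hb'
        · rintro (rfl | hb)
          · exact hamem.1
          · exact hsub hb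
      have hLHS : ∑ φ' ∈ (EN dV (bag i')).filter (fun φ' => ∀ b ∈ bag i, φ' b = φ b),
            (cnt F G bag dV i' φ' : ℝ) =
          ∑ ψ' ∈ EN dW (bag i'),
            X ((bag i).image fun b => (φ b, ψ' b)) * (cnt F H bag dW i' ψ' : ℝ) := by
        rw [Finset.sum_congr rfl (fun φ' _ => hCl φ')]
        rw [hins]
        rw [sum_D (dV := dV) hamem.2 φ]
        rw [Finset.sum_comm]
        apply Finset.sum_congr rfl
        intro ψ' hψ'
        rw [← Finset.sum_mul]
        congr 1
        have himg : ∀ v' : V, ((insert a (bag i)).image fun b =>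
            ((Function.update (fun b => if b ∈ bag i then φ b else dV) a v') b, ψ' b)) =
            insert (v', ψ' a) ((bag i).image fun b => (φ b, ψ' b)) := by
          intro v'
          rw [Finset.image_insert]
          congr 1
          · rw [Function.update_self]
          · apply Finset.image_congr
            intro b hb
            have hbB : b ∈ bag i := hb
            dsimp only
            rw [Function.update_of_ne (fun h : b = a => hamem.2 (h ▸ hbB)), if_pos hbB]
        rw [Finset.sum_congr rfl (fun v' _ => by rw [himg v'])]
        refine hL1 _ ?_ (ψ' a)
        have := Finset.card_image_le (s := bag i) (f := fun b => (φ b, ψ' b))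
        omega
      have hRHS : ∑ ψ ∈ EN dW (bag i),
            X ((bag i).image fun a => (φ a, ψ a)) * (cnt F H bag dW i ψ : ℝ) =
          ∑ ψ' ∈ EN dW (bag i'),
            X ((bag i).image fun b => (φ b, ψ' b)) * (cnt F H bag dW i' ψ' : ℝ) := by
        rw [← sum_EN_fiber dW hsub
          (fun ψ' => X ((bag i).image fun b => (φ b, ψ' b)) * (cnt F H bag dW i' ψ' : ℝ))]
        apply Finset.sum_congr rfl
        intro ψ hψ
        rw [cnt_even (G := H) (dV := dW) hsucc hsub ψ, Nat.cast_sum, Finset.mul_sum]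
        apply Finset.sum_congr rfl
        intro ψ' hψ'
        have hagree := (Finset.mem_filter.1 hψ').2
        congr 2
        apply Finset.image_congr
        intro b hb
        have hbB : b ∈ bag i := hb
        dsimp only
        rw [hagree b hbB]
      rw [cnt_even (dV := dV) hsucc hsub φ, Nat.cast_sum, hLHS, ← hRHS]
    · -- odd case : bag i' ⊆ bag i
      have hsub : bag i' ⊆ bag i := by
        have h := (hincl (i : ℕ) hi1).2 hpar
        rw [e2] at h
        exact h
      have hmid : ∀ b ∈ bag i, ∀ j, i' ≤ j → b ∈ bag j → b ∈ bag i' := by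
        intro b hb j hj hbj
        refine hdec.2.2 b i i' j ?_ hj hb hbj
        rw [Fin.le_def]; omega
      have hcti : (bag i).card = k + 1 := by
        have h := hsize i; rwa [if_neg (by omega)] at h
      have hcti' : (bag i').card = k := by
        have h := hsize i'
        rwa [if_pos (by omega : (i' : ℕ) % 2 = 0)] at h
      have hsd : (bag i \ bag i').card = 1 := by
        rw [Finset.card_sdiff_of_subset hsub]; omega
      obtain ⟨a, haeq⟩ := Finset.card_eq_one.1 hsd
      have hamem := Finset.mem_sdiff.1 (haeq ▸ Finset.mem_singleton_self a)
      have hins : bag i = insert a (bag i') := by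
        ext b
        rw [Finset.mem_insert]
        constructor
        · intro hb
          by_cases hbB : b ∈ bag i'
          · exact Or.inr hbB
          · left
            have hb' : b ∈ bag i \ bag i' := Finset.mem_sdiff.2 ⟨hb, hbB⟩
            rw [haeq] at hb'
            exact Finset.mem_singleton.1 hb'
        · rintro (rfl | hb)
          · exact hamem.1
          · exact hsub hb
      have hcard' : ∀ ψ : Fin p → W,
          ((bag i).image fun b => (φ b, ψ b)).card ≤ k + 1 := by
        intro ψ
        have := Finset.card_image_le (s := bag i) (f := fun b => (φ b, ψ b))
        omega
      rw [cnt_odd (dV := dV) hsucc hsub hmid φ, Nat.cast_mul]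
      by_cases hiso : IsoOn F G φ (bag i)
      · rw [if_pos hiso, Nat.cast_one, one_mul, hCl φ]
        symm
        calc ∑ ψ ∈ EN dW (bag i),
              X ((bag i).image fun a => (φ a, ψ a)) * (cnt F H bag dW i ψ : ℝ)
            = ∑ ψ ∈ EN dW (bag i),
                X ((bag i).image fun a => (φ a, ψ a)) * (cnt F H bag dW i' ψ : ℝ) := by
              apply Finset.sum_congr rfl
              intro ψ hψ
              rw [cnt_odd (G := H) (dV := dW) hsucc hsub hmid ψ, Nat.cast_mul]
              by_cases hisoH : IsoOn F H ψ (bag i)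
              · rw [if_pos hisoH, Nat.cast_one, one_mul]
              · have hz : X ((bag i).image fun a => (φ a, ψ a)) = 0 :=
                  hL3 _ (hcard' ψ) (fun hpi => hisoH (transferGH hiso hpi))
                rw [hz, zero_mul, zero_mul]
          _ = ∑ ψ0 ∈ EN dW (bag i'),
                X ((bag i').image fun a => (φ a, ψ0 a)) * (cnt F H bag dW i' ψ0 : ℝ) := by
              rw [hins, sum_EN_insert (dV := dW) hamem.2]
              rw [Finset.sum_comm]
              apply Finset.sum_congr rfl
              intro ψ0 hψ0
              have hupd : ∀ w : W, cnt F H bag dW i' (Function.update ψ0 a w) =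
                  cnt F H bag dW i' ψ0 := by
                intro w
                apply cnt_congr
                intro b hb
                exact Function.update_of_ne (fun h : b = a => hamem.2 (h ▸ hb)) _ _
              have himg : ∀ w : W, ((insert a (bag i')).image fun b =>
                  (φ b, Function.update ψ0 a w b)) =
                  insert (φ a, w) ((bag i').image fun b => (φ b, ψ0 b)) := by
                intro w
                rw [Finset.image_insert]
                congr 1
                · rw [Function.update_self]
                · apply Finset.image_congr
                  intro b hb
                  have hbB : b ∈ bag i' := hb
                  dsimp only
                  rw [Function.update_of_ne (fun h : b = a => hamem.2 (h ▸ hbB))]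
              rw [Finset.sum_congr rfl (fun w _ => by rw [himg w, hupd w])]
              rw [← Finset.sum_mul]
              congr 1
              refine hL2 _ ?_ (φ a)
              have := Finset.card_image_le (s := bag i') (f := fun b => (φ b, ψ0 b))
              omega
      · rw [if_neg hiso, Nat.cast_zero, zero_mul]
        symm
        apply Finset.sum_eq_zero
        intro ψ hψ
        rw [cnt_odd (G := H) (dV := dW) hsucc hsub hmid ψ, Nat.cast_mul]
        by_cases hisoH : IsoOn F H ψ (bag i)
        · have hz : X ((bag i).image fun a => (φ a, ψ a)) = 0 :=
            hL3 _ (hcard' ψ) (fun hpi => hiso (transferHG hisoH hpi))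
          rw [hz, zero_mul]
        · rw [if_neg hisoH, Nat.cast_zero, zero_mul, mul_zero]
  -- downward induction
  have key : ∀ n : ℕ, ∀ i : Fin (2 * ℓ - 1), 2 * ℓ - 2 ≤ (i : ℕ) + n →
      ∀ φ : Fin p → V, (cnt F G bag dV i φ : ℝ) =
        ∑ ψ ∈ EN dW (bag i),
          X ((bag i).image fun a => (φ a, ψ a)) * (cnt F H bag dW i ψ : ℝ) := by
    intro n
    induction n with
    | zero =>
      intro i hi
      have hieq : i = ⟨2 * ℓ - 2, hrt⟩ :=
        Fin.ext (show (i : ℕ) = 2 * ℓ - 2 by have := i.2; omega)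
      rw [hieq]
      exact base
    | succ n ih =>
      intro i hi
      by_cases hieq : (i : ℕ) = 2 * ℓ - 2
      · have hieq' : i = ⟨2 * ℓ - 2, hrt⟩ := Fin.ext hieq
        rw [hieq']
        exact base
      · have hi1 : (i : ℕ) + 1 < 2 * ℓ - 1 := by have := i.2; omega
        exact step i ⟨(i : ℕ) + 1, hi1⟩ rfl
          (ih ⟨(i : ℕ) + 1, hi1⟩ (by simp only [Fin.val_mk]; omega))
  have Cl0 := key (2 * ℓ - 2) ⟨0, hr⟩ (by omega)
  rw [← cnt_eq_biso F G bag dV hr hdec u hu hbag0 v,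
    Cl0 (fun a => if h : ∃ i, u i = a then v h.choose else dV)]
  refine (sum_EN_bag0 bag dW hr u hu hbag0
    (fun ψ => X ((bag ⟨0, hr⟩).image fun a =>
        ((fun a => if h : ∃ i, u i = a then v h.choose else dV) a, ψ a)) *
      (cnt F H bag dW ⟨0, hr⟩ ψ : ℝ))
    (fun w => X (Finset.univ.image fun i => (v i, w i)) * (bisoCondCount F bag H u w : ℝ))
    ?_).symm
  intro w
  beta_reduce
  rw [← cnt_eq_biso F H bag dW hr hdec u hu hbag0 w]
  congr 2
  rw [hbag0, Finset.image_image]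
  apply Finset.image_congr
  intro i _
  have h : ∃ j, u j = u i := ⟨i, rfl⟩
  have he : h.choose = i := hu h.choose_spec
  simp only [Function.comp_apply]
  beta_reduce
  rw [dif_pos h, dif_pos h, he]
end
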